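/- arXiv:2002.09116 — 7 statements merged into one kernel-verified Lean document; each statement's English description precedes it below -/
import Mathlib

section
/- Let f : X → ℝ be a measurable function and define the kernel k_f^{(S)}(x,y) = (1/4)·𝟙(f(x)>0)·𝟙(f(y)>0). For Borel probability measures P, Q on X, define acc(P,Q;f) = (1/2)·Pr_{X∼P}(f(X)>0) + (1/2)·Pr_{Y∼Q}(f(Y)≤0). Then MMD(P,Q;k_f^{(S)}) = |acc(P,Q;f) − 1/2|. Moreover, for sample sets S_P = {x_1,…,x_n} and S_Q = {y_1,…,y_n}, defining the empirical accuracy âcc(S_P,S_Q;f) = (1/(2n))·Σ_{i=1}^n 𝟙(f(x_i)>0) + (1/(2n))·Σ_{i=1}^n 𝟙(f(y_i)≤0), the biased estimator satisfies MMD_b(S_P,S_Q;k_f^{(S)}) = |âcc(S_P,S_Q;f) − 1/2|. -/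
open MeasureTheory Finset

noncomputable section

def MMD2 {𝓧 : Type*} [MeasurableSpace 𝓧] (k : 𝓧 → 𝓧 → ℝ) (P Q : Measure 𝓧) : ℝ :=
  (∫ x, ∫ x', k x x' ∂P ∂P) + (∫ y, ∫ y', k y y' ∂Q ∂Q) - 2 * ∫ x, ∫ y, k x y ∂Q ∂P

def MMDbSq {𝓧 : Type*} {n : ℕ} (k : 𝓧 → 𝓧 → ℝ) (x y : Fin n → 𝓧) : ℝ :=
  (1 / (n : ℝ) ^ 2) * ∑ i : Fin n, ∑ j : Fin n,
    (k (x i) (x j) + k (y i) (y j) - k (x i) (y j) - k (x j) (y i))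

/-- The C2ST-S accuracy kernel `k_f^{(S)}` corresponds to MMD equal to `|acc - 1/2|`,
both at the population level and for the biased estimator on samples. -/
theorem mmd_sign_kernel_eq_acc {𝓧 : Type*} [MeasurableSpace 𝓧]
    (f : 𝓧 → ℝ) (hf : Measurable f)
    (k : 𝓧 → 𝓧 → ℝ)
    (hk : ∀ x y, k x y =
      (1 / 4) * (if 0 < f x then (1 : ℝ) else 0) * (if 0 < f y then (1 : ℝ) else 0))
    (P Q : Measure 𝓧) [IsProbabilityMeasure P] [IsProbabilityMeasure Q]
    (n : ℕ) (hn : 1 ≤ n) (x y : Fin n → 𝓧) :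
    Real.sqrt (MMD2 k P Q) =
      |((1 / 2) * (P {a | 0 < f a}).toReal + (1 / 2) * (Q {a | f a ≤ 0}).toReal) - 1 / 2| ∧
    Real.sqrt (MMDbSq k x y) =
      |((1 / (2 * (n : ℝ))) * ∑ i : Fin n, (if 0 < f (x i) then (1 : ℝ) else 0)
        + (1 / (2 * (n : ℝ))) * ∑ i : Fin n, (if f (y i) ≤ 0 then (1 : ℝ) else 0)) - 1 / 2| := by
  set s : Set 𝓧 := {a | 0 < f a} with hs_def
  have hs : MeasurableSet s := measurableSet_lt measurable_const hf
  set g : 𝓧 → ℝ := fun a => if 0 < f a then (1 : ℝ) else 0 with hg_def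
  have hint : ∀ (μ : Measure 𝓧), ∫ a, g a ∂μ = (μ s).toReal := by
    intro μ
    rw [show g = Set.indicator s 1 by
      funext a; simp [Set.indicator_apply, hg_def, hs_def, Set.mem_setOf_eq],
      integral_indicator_one hs]
    rfl
  set p : ℝ := (P s).toReal with hp_def
  set q : ℝ := (Q s).toReal with hq_def
  have hdouble : ∀ (μ ν : Measure 𝓧), (∫ a, ∫ b, k a b ∂ν ∂μ) = (1/4) * (μ s).toReal * (ν s).toReal := by
    intro μ ν
    have inner : ∀ c : 𝓧, ∫ b, k c b ∂ν = (1/4) * g c * (ν s).toReal := by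
      intro c
      simp only [hk]
      rw [show (fun b => 1/4 * (if 0 < f c then (1:ℝ) else 0) * (if 0 < f b then (1:ℝ) else 0))
          = (fun b => (1/4 * g c) * g b) from rfl, integral_const_mul, hint]
    simp only [inner]
    rw [show (fun a => 1/4 * g a * (ν s).toReal) = (fun a => (1/4 * (ν s).toReal) * g a) by
        funext a; ring, integral_const_mul, hint]
    ring
  have hcompl : (Q {a | f a ≤ 0}).toReal = 1 - q := by
    have hce : {a | f a ≤ 0} = sᶜ := by ext a; simp [hs_def, not_lt]
    rw [hce, measure_compl hs (measure_ne_top Q s), measure_univ,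
      ENNReal.toReal_sub_of_le prob_le_one (by simp)]
    simp [hq_def]
  constructor
  · have hM : MMD2 k P Q = ((p - q)/2)^2 := by
      rw [MMD2, hdouble P P, hdouble Q Q, hdouble P Q, ← hp_def, ← hq_def]
      ring
    rw [hM, Real.sqrt_sq_eq_abs, hcompl]
    congr 1
    ring
  · set d : Fin n → ℝ := fun i => g (x i) - g (y i) with hd_def
    have hterm : ∀ i j, k (x i) (x j) + k (y i) (y j) - k (x i) (y j) - k (x j) (y i)
        = (1/4) * (d i * d j) := by
      intro i j
      simp only [hk, hd_def, hg_def]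
      ring
    have hsum : ∑ i : Fin n, ∑ j : Fin n,
        (k (x i) (x j) + k (y i) (y j) - k (x i) (y j) - k (x j) (y i))
        = (1/4) * (∑ i : Fin n, d i)^2 := by
      simp only [hterm, ← Finset.mul_sum, ← Finset.sum_mul]
      ring
    have hnpos : (0:ℝ) < n := by exact_mod_cast hn
    have hne : (n:ℝ) ≠ 0 := hnpos.ne'
    have hM : MMDbSq k x y = ((∑ i : Fin n, d i) / (2*n))^2 := by
      rw [MMDbSq, hsum]
      ring
    rw [hM, Real.sqrt_sq_eq_abs]
    have hy : ∑ i : Fin n, (if f (y i) ≤ 0 then (1:ℝ) else 0)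
        = n - ∑ i : Fin n, g (y i) := by
      rw [eq_sub_iff_add_eq, ← Finset.sum_add_distrib]
      have h1 : ∀ i : Fin n, (if f (y i) ≤ 0 then (1:ℝ) else 0) + g (y i) = 1 := by
        intro i
        by_cases h : 0 < f (y i)
        · simp [hg_def, h, not_le.mpr h]
        · simp [hg_def, h, not_lt.mp h]
      simp [h1]
    congr 1
    rw [hy]
    simp only [hd_def, Finset.sum_sub_distrib]
    field_simp
    ring
end
end

section
/- Let k be a fixed symmetric kernel with |k(x,y)| ≤ ν for all x, y. Then with probability at least 1 − δ over the draw of the samples, | σ̂_k² − E[σ̂_k²] | ≤ 448·ν²·sqrt( (2/n)·log(2/δ) ). -/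
open MeasureTheory Finset

noncomputable section

/-- `H_{ij} = k(X_i,X_j) + k(Y_i,Y_j) - k(X_i,Y_j) - k(X_j,Y_i)` for the sample
`sp = (X, Y)`. -/
def Hmat {𝓧 : Type*} {n : ℕ} (k : 𝓧 → 𝓧 → ℝ) (sp : (Fin n → 𝓧) × (Fin n → 𝓧))
    (i j : Fin n) : ℝ :=
  k (sp.1 i) (sp.1 j) + k (sp.2 i) (sp.2 j) - k (sp.1 i) (sp.2 j) - k (sp.1 j) (sp.2 i)

/-- The U-statistic MMD estimator `η̂ = (1/(n(n-1))) ∑_{i≠j} H_{ij}`. -/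
def etaHat {𝓧 : Type*} {n : ℕ} (k : 𝓧 → 𝓧 → ℝ) (sp : (Fin n → 𝓧) × (Fin n → 𝓧)) : ℝ :=
  (1 / ((n : ℝ) * ((n : ℝ) - 1))) * ∑ i : Fin n, ∑ j ∈ univ.erase i, Hmat k sp i j

/-- The variance estimator
`σ̂² = 4 ( (1/n³) ∑_i (∑_j H_{ij})² - (1/n⁴) (∑_{ij} H_{ij})² )`. -/
def sigmaHatSq {𝓧 : Type*} {n : ℕ} (k : 𝓧 → 𝓧 → ℝ) (sp : (Fin n → 𝓧) × (Fin n → 𝓧)) : ℝ :=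
  4 * ((1 / (n : ℝ) ^ 3) * ∑ i : Fin n, (∑ j : Fin n, Hmat k sp i j) ^ 2
     - (1 / (n : ℝ) ^ 4) * (∑ i : Fin n, ∑ j : Fin n, Hmat k sp i j) ^ 2)

/-- `h((x,y),(x',y')) = k(x,x') + k(y,y') - k(x,y') - k(x',y)`, so that
`H_{ij} = h((X_i,Y_i),(X_j,Y_j))`. -/
def hPair {𝓧 : Type*} (k : 𝓧 → 𝓧 → ℝ) (u v : 𝓧 × 𝓧) : ℝ :=
  k u.1 v.1 + k u.2 v.2 - k u.1 v.2 - k v.1 u.2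

/-- Population value `η = E[H_{12}]` (the squared MMD). -/
def etaPop {𝓧 : Type*} [MeasurableSpace 𝓧] (k : 𝓧 → 𝓧 → ℝ) (P Q : Measure 𝓧) : ℝ :=
  ∫ u, ∫ v, hPair k u v ∂(P.prod Q) ∂(P.prod Q)

/-- Population second moment `E[H_{12} H_{13}]`. -/
def hCross {𝓧 : Type*} [MeasurableSpace 𝓧] (k : 𝓧 → 𝓧 → ℝ) (P Q : Measure 𝓧) : ℝ :=
  ∫ u, ∫ v, ∫ w, hPair k u v * hPair k u w ∂(P.prod Q) ∂(P.prod Q) ∂(P.prod Q)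

/-- The asymptotic variance `σ² = 4 (E[H_{12} H_{13}] - E[H_{12}]²)`. -/
def sigmaSqPop {𝓧 : Type*} [MeasurableSpace 𝓧] (k : 𝓧 → 𝓧 → ℝ) (P Q : Measure 𝓧) : ℝ :=
  4 * (hCross k P Q - (etaPop k P Q) ^ 2)

/-- The joint law of `n` i.i.d. samples from `P` and `n` i.i.d. samples from `Q`,
all mutually independent. -/
def sampleMeasure {𝓧 : Type*} [MeasurableSpace 𝓧] (P Q : Measure 𝓧) (n : ℕ) :
    Measure ((Fin n → 𝓧) × (Fin n → 𝓧)) :=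
  (Measure.pi fun _ => P).prod (Measure.pi fun _ => Q)


lemma exp_le_quad {x : ℝ} (hx : x ≤ 1) : Real.exp x ≤ 1 + x + (3/4) * x ^ 2 := by
  rcases le_or_gt (-1) x with h | h
  · have hb := Real.exp_bound (x := x) (by rw [abs_le]; exact ⟨h, hx⟩) (n := 2) (by norm_num)
    have hs : ∑ i ∈ Finset.range 2, x ^ i / (Nat.factorial i) = 1 + x := by
      simp [Finset.sum_range_succ]
    rw [hs, sq_abs] at hb
    norm_num [Nat.factorial] at hb
    have := abs_le.mp hb
    nlinarith [this.2]
  · have h1 : Real.exp x ≤ Real.exp (-1) := Real.exp_le_exp.mpr (le_of_lt h)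
    have h2 : Real.exp (-1) ≤ 1/2 := by
      rw [Real.exp_neg]
      have he : (2:ℝ) ≤ Real.exp 1 := by linarith [Real.add_one_le_exp (1:ℝ)]
      have := Real.exp_pos 1
      rw [inv_le_comm₀ this (by norm_num)]
      linarith
    nlinarith [sq_nonneg (x+1)]

lemma integrable_of_bdd {Ω : Type*} [MeasurableSpace Ω] {μ : Measure Ω} [IsFiniteMeasure μ]
    {f : Ω → ℝ} (hf : Measurable f) (C : ℝ) (hC : ∀ ω, |f ω| ≤ C) : Integrable f μ :=
  (integrable_const C).mono' hf.aestronglyMeasurable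
    (ae_of_all _ (by simpa [Real.norm_eq_abs] using hC))

lemma mgf_onedim {Ω : Type*} [MeasurableSpace Ω] (μ : Measure Ω) [IsProbabilityMeasure μ]
    (h : Ω → ℝ) (hm : Measurable h) (C : ℝ) (hC : ∀ ω, |h ω| ≤ C)
    (c lam : ℝ) (hc : 0 ≤ c) (hlam : 0 ≤ lam) (hlc : lam * c ≤ 1)
    (hdiff : ∀ ω ω', h ω - h ω' ≤ c) :
    ∫ ω, Real.exp (lam * h ω) ∂μ ≤
      Real.exp (3/16 * (lam^2 * c^2)) * Real.exp (lam * ∫ ω, h ω ∂μ) := by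
  have hne : Nonempty Ω := by
    by_contra hc'
    rw [not_nonempty_iff] at hc'
    have h1 := measure_univ (μ := μ)
    rw [Set.univ_eq_empty_iff.mpr hc'] at h1
    simp at h1
  set a := ⨅ ω, h ω with ha
  have hbddb : BddBelow (Set.range h) := by
    refine ⟨-C, ?_⟩
    rintro y ⟨ω, rfl⟩
    linarith [(abs_le.mp (hC ω)).1]
  have hla : ∀ ω, a ≤ h ω := fun ω => ciInf_le hbddb ω
  have hub : ∀ ω, h ω ≤ a + c := by
    intro ω
    have : h ω - c ≤ a := le_ciInf (fun ω' => by linarith [hdiff ω ω'])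
    linarith
  have hint : Integrable h μ := integrable_of_bdd hm C hC
  set M := ∫ ω, h ω ∂μ with hM
  have hM1 : a ≤ M := by
    have := integral_mono (μ := μ) (integrable_const a) hint hla
    simpa using this
  have hM2 : M ≤ a + c := by
    have := integral_mono (μ := μ) hint (integrable_const (a + c)) hub
    simpa using this
  set A := a - M with hA
  set B := a + c - M with hB
  have hA0 : A ≤ 0 := by simp [hA]; linarith
  have hB0 : 0 ≤ B := by simp [hB]; linarith
  set φ : Ω → ℝ := fun ω => h ω - M with hφ
  have hφm : Measurable φ := hm.sub measurable_const
  have hφab : ∀ ω, A ≤ φ ω ∧ φ ω ≤ B := fun ω => ⟨by simp [hφ, hA]; linarith [hla ω],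
    by simp [hφ, hB]; linarith [hub ω]⟩
  have hφbd : ∀ ω, |φ ω| ≤ c := by
    intro ω
    rw [abs_le]
    constructor
    · linarith [(hφab ω).1]
    · linarith [(hφab ω).2]
  have hintφ : Integrable φ μ := hint.sub (integrable_const M)
  have hintφ2 : Integrable (fun ω => φ ω ^ 2) μ :=
    integrable_of_bdd (hφm.pow_const 2) (c^2) (fun ω => by
      rw [abs_pow]
      have h1 := hφbd ω
      have h2 := abs_nonneg (φ ω)
      nlinarith)
  have keyφ : ∫ ω, φ ω ∂μ = 0 := by
    rw [hφ, integral_sub hint (integrable_const M)]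
    simp [hM]
  have key2 : ∫ ω, φ ω ^ 2 ∂μ ≤ c^2 / 4 := by
    have hpt : ∀ ω, φ ω ^ 2 ≤ (A + B) * φ ω - A * B := by
      intro ω
      nlinarith [(hφab ω).1, (hφab ω).2]
    have hintr : Integrable (fun ω => (A + B) * φ ω - A * B) μ :=
      (hintφ.const_mul _).sub (integrable_const _)
    have hmono := integral_mono hintφ2 hintr hpt
    rw [integral_sub (hintφ.const_mul _) (integrable_const _), integral_const_mul, keyφ] at hmono
    simp only [mul_zero, integral_const, measure_univ, probReal_univ, ENNReal.toReal_one, smul_eq_mul,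
      one_mul, zero_sub] at hmono
    have hcB : B - A = c := by simp only [hA, hB]; ring
    nlinarith [sq_nonneg (A+B)]
  have hptexp : ∀ ω, Real.exp (lam * φ ω) ≤ 1 + lam * φ ω + 3/4 * (lam * φ ω)^2 := by
    intro ω
    apply exp_le_quad
    calc lam * φ ω ≤ lam * c := by
          have := (hφab ω).2
          have hBc : B ≤ c := by linarith
          nlinarith [hφbd ω, abs_le.mp (hφbd ω)]
    _ ≤ 1 := hlc
  have hintexp : Integrable (fun ω => Real.exp (lam * φ ω)) μ :=
    integrable_of_bdd ((hφm.const_mul lam).exp) (Real.exp (lam * c)) (fun ω => by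
      rw [abs_of_pos (Real.exp_pos _)]
      apply Real.exp_le_exp.mpr
      nlinarith [abs_le.mp (hφbd ω)])
  have step1 : ∫ ω, Real.exp (lam * φ ω) ∂μ ≤ 1 + 3/4 * lam^2 * (∫ ω, φ ω ^2 ∂μ) := by
    have hintr : Integrable (fun ω => 1 + lam * φ ω + 3/4 * (lam * φ ω)^2) μ := by
      refine ((integrable_const (1:ℝ)).add (hintφ.const_mul lam)).add ?_
      have : (fun ω => 3/4 * (lam * φ ω)^2) = fun ω => (3/4 * lam^2) * φ ω ^2 := by
        funext ω; ring
      rw [this]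
      exact hintφ2.const_mul _
    have := integral_mono hintexp hintr hptexp
    calc ∫ ω, Real.exp (lam * φ ω) ∂μ ≤ ∫ ω, (1 + lam * φ ω + 3/4 * (lam * φ ω)^2) ∂μ := this
    _ = 1 + 3/4 * lam^2 * (∫ ω, φ ω ^2 ∂μ) := by
        have hrw : ∀ ω, 1 + lam * φ ω + 3/4 * (lam * φ ω)^2
            = 1 + (lam * φ ω + (3/4 * lam^2) * φ ω ^2) := fun ω => by ring
        simp_rw [hrw]
        have hint_b : Integrable (fun ω => 3/4 * lam^2 * φ ω ^ 2) μ := hintφ2.const_mul _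
        have hint_c : Integrable (fun ω => lam * φ ω) μ := hintφ.const_mul lam
        have hint_a : Integrable (fun ω => lam * φ ω + 3/4 * lam^2 * φ ω ^ 2) μ :=
          hint_c.add hint_b
        rw [integral_add (integrable_const (1:ℝ)) hint_a, integral_add hint_c hint_b,
          integral_const_mul, integral_const_mul, keyφ]
        simp
  have step2 : ∫ ω, Real.exp (lam * φ ω) ∂μ ≤ Real.exp (3/16 * (lam^2 * c^2)) := by
    have h1 : 1 + 3/4 * lam^2 * (∫ ω, φ ω ^2 ∂μ) ≤ 1 + 3/16 * (lam^2 * c^2) := by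
      nlinarith [key2, sq_nonneg lam, integral_nonneg (f := fun ω => φ ω ^ 2) (fun ω => sq_nonneg (φ ω)) (μ := μ)]
    calc ∫ ω, Real.exp (lam * φ ω) ∂μ ≤ 1 + 3/16 * (lam^2 * c^2) := le_trans step1 h1
    _ ≤ Real.exp (3/16 * (lam^2 * c^2)) := by linarith [Real.add_one_le_exp (3/16 * (lam^2 * c^2))]
  have heq : ∀ ω, Real.exp (lam * h ω) = Real.exp (lam * φ ω) * Real.exp (lam * M) := by
    intro ω
    rw [← Real.exp_add]
    congr 1
    simp [hφ]; ring
  calc ∫ ω, Real.exp (lam * h ω) ∂μ = ∫ ω, Real.exp (lam * φ ω) * Real.exp (lam * M) ∂μ := by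
        simp_rw [heq]
  _ = (∫ ω, Real.exp (lam * φ ω) ∂μ) * Real.exp (lam * M) := integral_mul_const _ _
  _ ≤ Real.exp (3/16 * (lam^2 * c^2)) * Real.exp (lam * M) :=
      mul_le_mul_of_nonneg_right step2 (le_of_lt (Real.exp_pos _))

lemma prodStep {Ω₁ Ω₂ : Type*} [MeasurableSpace Ω₁] [MeasurableSpace Ω₂]
    (μ₁ : Measure Ω₁) (μ₂ : Measure Ω₂) [IsProbabilityMeasure μ₁] [IsProbabilityMeasure μ₂]
    (F : Ω₁ × Ω₂ → ℝ) (hF : Measurable F) (C : ℝ) (hC : ∀ z, |F z| ≤ C)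
    (lam B₁ B₂ : ℝ) (hB₂ : 0 ≤ B₂)
    (ha : ∀ x, ∫ y, Real.exp (lam * F (x, y)) ∂μ₂ ≤
      B₂ * Real.exp (lam * ∫ y, F (x, y) ∂μ₂))
    (hb : ∫ x, Real.exp (lam * ∫ y, F (x, y) ∂μ₂) ∂μ₁ ≤
      B₁ * Real.exp (lam * ∫ x, (∫ y, F (x, y) ∂μ₂) ∂μ₁)) :
    ∫ z, Real.exp (lam * F z) ∂(μ₁.prod μ₂) ≤
      B₂ * B₁ * Real.exp (lam * ∫ z, F z ∂(μ₁.prod μ₂)) := by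
  have hFexp : Measurable (fun z => Real.exp (lam * F z)) := ((hF.const_mul lam).exp)
  have hintFexp : Integrable (fun z => Real.exp (lam * F z)) (μ₁.prod μ₂) :=
    integrable_of_bdd hFexp (Real.exp (|lam| * C)) (fun z => by
      rw [abs_of_pos (Real.exp_pos _)]
      apply Real.exp_le_exp.mpr
      calc lam * F z ≤ |lam * F z| := le_abs_self _
      _ = |lam| * |F z| := abs_mul _ _
      _ ≤ |lam| * C := by
          have := hC z
          have := (abs_nonneg (F z)).trans this
          nlinarith [abs_nonneg lam, hC z])
  have hintF : Integrable F (μ₁.prod μ₂) := integrable_of_bdd hF C hC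
  have hg : ∀ x, ∫ y, F (x, y) ∂μ₂ = ∫ y, F (x, y) ∂μ₂ := fun _ => rfl
  have hgm : Measurable (fun x => ∫ y, F (x, y) ∂μ₂) :=
    (hF.stronglyMeasurable.integral_prod_right').measurable
  have hgbd : ∀ x, |∫ y, F (x, y) ∂μ₂| ≤ C := by
    intro x
    rw [← Real.norm_eq_abs]
    calc ‖∫ y, F (x, y) ∂μ₂‖ ≤ C * (μ₂ Set.univ).toReal :=
      norm_integral_le_of_norm_le_const (ae_of_all _ (fun y => by
        rw [Real.norm_eq_abs]; exact hC (x, y)))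
    _ = C := by simp
  have hinner_m : Measurable (fun x => ∫ y, Real.exp (lam * F (x, y)) ∂μ₂) :=
    (hFexp.stronglyMeasurable.integral_prod_right').measurable
  have step1 : ∫ z, Real.exp (lam * F z) ∂(μ₁.prod μ₂)
      = ∫ x, (∫ y, Real.exp (lam * F (x, y)) ∂μ₂) ∂μ₁ := integral_prod _ hintFexp
  have step2 : ∫ x, (∫ y, Real.exp (lam * F (x, y)) ∂μ₂) ∂μ₁
      ≤ ∫ x, B₂ * Real.exp (lam * ∫ y, F (x, y) ∂μ₂) ∂μ₁ := by
    apply integral_mono _ _ ha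
    · exact integrable_of_bdd hinner_m (Real.exp (|lam| * C)) (fun x => by
        rw [abs_of_nonneg (integral_nonneg (fun y => (Real.exp_pos _).le))]
        calc ∫ y, Real.exp (lam * F (x, y)) ∂μ₂ ≤ ∫ _, Real.exp (|lam| * C) ∂μ₂ := by
              apply integral_mono _ (integrable_const _) _
              · exact integrable_of_bdd (hFexp.comp measurable_prodMk_left)
                  (Real.exp (|lam| * C)) (fun y => by
                    rw [abs_of_pos (Real.exp_pos _)]
                    apply Real.exp_le_exp.mpr
                    calc lam * F (x, y) ≤ |lam| * |F (x, y)| := by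
                          rw [← abs_mul]; exact le_abs_self _
                    _ ≤ |lam| * C := mul_le_mul_of_nonneg_left (hC _) (abs_nonneg _))
              · intro y
                apply Real.exp_le_exp.mpr
                calc lam * F (x, y) ≤ |lam| * |F (x, y)| := by
                      rw [← abs_mul]; exact le_abs_self _
                _ ≤ |lam| * C := mul_le_mul_of_nonneg_left (hC _) (abs_nonneg _)
        _ = Real.exp (|lam| * C) := by simp)
    · exact (integrable_of_bdd ((hgm.const_mul lam).exp) (Real.exp (|lam| * C)) (fun x => by
        rw [abs_of_pos (Real.exp_pos _)]
        apply Real.exp_le_exp.mpr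
        calc lam * (∫ y, F (x, y) ∂μ₂) ≤ |lam| * |∫ y, F (x, y) ∂μ₂| := by
              rw [← abs_mul]; exact le_abs_self _
        _ ≤ |lam| * C := mul_le_mul_of_nonneg_left (hgbd _) (abs_nonneg _))).const_mul B₂
  have step3 : ∫ x, B₂ * Real.exp (lam * ∫ y, F (x, y) ∂μ₂) ∂μ₁
      ≤ B₂ * (B₁ * Real.exp (lam * ∫ x, (∫ y, F (x, y) ∂μ₂) ∂μ₁)) := by
    rw [integral_const_mul]
    exact mul_le_mul_of_nonneg_left hb hB₂
  have hEq : ∫ x, (∫ y, F (x, y) ∂μ₂) ∂μ₁ = ∫ z, F z ∂(μ₁.prod μ₂) :=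
    (integral_prod _ hintF).symm
  rw [hEq] at step3
  calc ∫ z, Real.exp (lam * F z) ∂(μ₁.prod μ₂)
      ≤ B₂ * (B₁ * Real.exp (lam * ∫ z, F z ∂(μ₁.prod μ₂))) := by
        rw [step1]; exact le_trans step2 step3
  _ = B₂ * B₁ * Real.exp (lam * ∫ z, F z ∂(μ₁.prod μ₂)) := by ring

lemma lemA {𝓧 : Type*} [MeasurableSpace 𝓧] (m : ℕ) :
    ∀ (μ : Fin m → Measure 𝓧), (∀ i, IsProbabilityMeasure (μ i)) →
    ∀ (G : (Fin m → 𝓧) → ℝ), Measurable G → ∀ (C : ℝ), (∀ x, |G x| ≤ C) →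
    ∀ (c lam : ℝ), 0 ≤ c → 0 ≤ lam → lam * c ≤ 1 →
    (∀ (x : Fin m → 𝓧) (i : Fin m) (z : 𝓧), |G (Function.update x i z) - G x| ≤ c) →
    ∫ x, Real.exp (lam * G x) ∂(Measure.pi μ) ≤
      Real.exp (m * (3/16 * (lam^2 * c^2))) * Real.exp (lam * ∫ x, G x ∂(Measure.pi μ)) := by
  induction m with
  | zero =>
    intro μ hprob G hG C hC c lam hc hlam hlc hdiff
    haveI := hprob
    haveI : IsProbabilityMeasure (Measure.pi μ) := by infer_instance
    have hconst : ∀ x : Fin 0 → 𝓧, G x = G (fun i => i.elim0) :=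
      fun x => congrArg G (Subsingleton.elim _ _)
    simp_rw [hconst]
    simp
  | succ m ih =>
    intro μ hprob G hG C hC c lam hc hlam hlc hdiff
    haveI := hprob
    haveI : ∀ j : Fin m, IsProbabilityMeasure (μ ((0 : Fin (m+1)).succAbove j)) :=
      fun j => hprob _
    set ν := Measure.pi (fun j : Fin m => μ ((0 : Fin (m+1)).succAbove j)) with hν
    haveI : IsProbabilityMeasure ν := by rw [hν]; infer_instance
    haveI : IsProbabilityMeasure (μ 0) := hprob 0
    set e := MeasurableEquiv.piFinSuccAbove (fun _ : Fin (m+1) => 𝓧) 0 with he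
    have hmp : MeasurePreserving e (Measure.pi μ) ((μ 0).prod ν) :=
      measurePreserving_piFinSuccAbove μ 0
    have hsymm_apply : ∀ p : 𝓧 × (Fin m → 𝓧), e.symm p = Fin.cons p.1 p.2 := by
      intro p
      have h1 : e.symm p = Fin.insertNth 0 p.1 p.2 := rfl
      rw [h1, Fin.insertNth_zero']
    set F : 𝓧 × (Fin m → 𝓧) → ℝ := fun p => G (e.symm p) with hF
    have hFmeas : Measurable F := hG.comp e.symm.measurable
    have hFbd : ∀ p, |F p| ≤ C := fun p => hC _
    have hint1 : ∫ x, Real.exp (lam * G x) ∂(Measure.pi μ)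
        = ∫ p, Real.exp (lam * F p) ∂((μ 0).prod ν) := by
      rw [← hmp.integral_comp' (g := fun p => Real.exp (lam * F p))]
      simp [hF]
    have hint2 : ∫ x, G x ∂(Measure.pi μ) = ∫ p, F p ∂((μ 0).prod ν) := by
      rw [← hmp.integral_comp' (g := F)]
      simp [hF]
    rw [hint1, hint2]
    have key := prodStep (μ 0) ν F hFmeas C hFbd lam
      (Real.exp (3/16 * (lam^2 * c^2))) (Real.exp (m * (3/16 * (lam^2 * c^2))))
      (Real.exp_pos _).le
      (by
        intro x
        have hdiff' : ∀ (y : Fin m → 𝓧) (j : Fin m) (z : 𝓧),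
            |(fun y => F (x, y)) (Function.update y j z) - (fun y => F (x, y)) y| ≤ c := by
          intro y j z
          simp only [hF, hsymm_apply]
          rw [show (Fin.cons x (Function.update y j z) : Fin (m+1) → 𝓧)
              = Function.update (Fin.cons x y) j.succ z from Fin.cons_update ..]
          exact hdiff _ _ _
        exact ih (fun j => μ ((0 : Fin (m+1)).succAbove j)) (fun j => hprob _)
          (fun y => F (x, y)) (hFmeas.comp measurable_prodMk_left) C (fun y => hFbd _)
          c lam hc hlam hlc hdiff')
      (by
        have hgm : Measurable (fun x => ∫ y, F (x, y) ∂ν) :=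
          (hFmeas.stronglyMeasurable.integral_prod_right').measurable
        have hgbd : ∀ x, |∫ y, F (x, y) ∂ν| ≤ C := by
          intro x
          rw [← Real.norm_eq_abs]
          calc ‖∫ y, F (x, y) ∂ν‖ ≤ C * (ν Set.univ).toReal :=
            norm_integral_le_of_norm_le_const (ae_of_all _ (fun y => by
              rw [Real.norm_eq_abs]; exact hFbd (x, y)))
          _ = C := by simp
        have hgdiff : ∀ x x', (∫ y, F (x, y) ∂ν) - (∫ y, F (x', y) ∂ν) ≤ c := by
          intro x x'
          have hintx : Integrable (fun y => F (x, y)) ν :=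
            integrable_of_bdd (hFmeas.comp measurable_prodMk_left) C (fun y => hFbd _)
          have hintx' : Integrable (fun y => F (x', y)) ν :=
            integrable_of_bdd (hFmeas.comp measurable_prodMk_left) C (fun y => hFbd _)
          rw [← integral_sub hintx hintx']
          calc ∫ y, (F (x, y) - F (x', y)) ∂ν ≤ ∫ _, c ∂ν := by
                apply integral_mono (hintx.sub hintx') (integrable_const c)
                intro y
                simp only [Pi.sub_apply, hF, hsymm_apply]
                rw [show (Fin.cons x y : Fin (m+1) → 𝓧)
                    = Function.update (Fin.cons x' y) 0 x from (Fin.update_cons_zero ..).symm]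
                exact le_trans (le_abs_self _) (hdiff _ _ _)
          _ = c := by simp
        exact mgf_onedim (μ 0) (fun x => ∫ y, F (x, y) ∂ν) hgm C hgbd c lam hc hlam hlc hgdiff)
    calc ∫ p, Real.exp (lam * F p) ∂((μ 0).prod ν)
        ≤ Real.exp (m * (3/16 * (lam^2 * c^2))) * Real.exp (3/16 * (lam^2 * c^2)) *
          Real.exp (lam * ∫ p, F p ∂((μ 0).prod ν)) := key
    _ = Real.exp ((m + 1 : ℕ) * (3/16 * (lam^2 * c^2))) *
          Real.exp (lam * ∫ p, F p ∂((μ 0).prod ν)) := by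
        rw [← Real.exp_add]
        congr 1
        push_cast
        ring

section HmatFacts
variable {𝓧 : Type*} {n : ℕ} (k : 𝓧 → 𝓧 → ℝ) {ν : ℝ}

lemma nu_nonneg (hbdd : ∀ x y, |k x y| ≤ ν) (x : 𝓧) : 0 ≤ ν := le_trans (abs_nonneg _) (hbdd x x)

lemma Hmat_abs_le (hbdd : ∀ x y, |k x y| ≤ ν) (sp : (Fin n → 𝓧) × (Fin n → 𝓧)) (i j : Fin n) :
    |Hmat k sp i j| ≤ 4 * ν := by
  have h1 := abs_le.mp (hbdd (sp.1 i) (sp.1 j))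
  have h2 := abs_le.mp (hbdd (sp.2 i) (sp.2 j))
  have h3 := abs_le.mp (hbdd (sp.1 i) (sp.2 j))
  have h4 := abs_le.mp (hbdd (sp.1 j) (sp.2 i))
  rw [Hmat, abs_le]
  constructor <;> linarith

lemma sigmaHatSq_meas {𝓧 : Type*} [MeasurableSpace 𝓧] {n : ℕ} (k : 𝓧 → 𝓧 → ℝ)
    (hmeas : Measurable fun p : 𝓧 × 𝓧 => k p.1 p.2) :
    Measurable (sigmaHatSq k : (Fin n → 𝓧) × (Fin n → 𝓧) → ℝ) := by
  have hk : ∀ (u v : ((Fin n → 𝓧) × (Fin n → 𝓧)) → 𝓧), Measurable u → Measurable v →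
      Measurable (fun sp => k (u sp) (v sp)) := by
    intro u v hu hv
    exact hmeas.comp (hu.prodMk hv)
  have hX : ∀ i : Fin n, Measurable (fun sp : (Fin n → 𝓧) × (Fin n → 𝓧) => sp.1 i) :=
    fun i => (measurable_pi_apply i).comp measurable_fst
  have hY : ∀ i : Fin n, Measurable (fun sp : (Fin n → 𝓧) × (Fin n → 𝓧) => sp.2 i) :=
    fun i => (measurable_pi_apply i).comp measurable_snd
  have hHm : ∀ i j, Measurable (fun sp : (Fin n → 𝓧) × (Fin n → 𝓧) => Hmat k sp i j) := by
    intro i j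
    unfold Hmat
    exact (((hk _ _ (hX i) (hX j)).add (hk _ _ (hY i) (hY j))).sub
      (hk _ _ (hX i) (hY j))).sub (hk _ _ (hX j) (hY i))
  unfold sigmaHatSq
  apply Measurable.const_mul
  apply Measurable.sub
  · exact (Finset.measurable_sum univ (fun i _ =>
      (Finset.measurable_sum univ (fun j _ => hHm i j)).pow_const 2)).const_mul _
  · exact ((Finset.measurable_sum univ (fun i _ =>
      Finset.measurable_sum univ (fun j _ => hHm i j))).pow_const 2).const_mul _

lemma sigmaHatSq_abs_le (hbdd : ∀ x y, |k x y| ≤ ν) (hn : 1 ≤ n) (sp : (Fin n → 𝓧) × (Fin n → 𝓧)) :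
    |sigmaHatSq k sp| ≤ 128 * ν ^ 2 := by
  have hν : 0 ≤ ν := nu_nonneg k hbdd (sp.1 ⟨0, hn⟩)
  have hR : ∀ i, |∑ j, Hmat k sp i j| ≤ 4 * ν * n := by
    intro i
    calc |∑ j, Hmat k sp i j| ≤ ∑ j, |Hmat k sp i j| := Finset.abs_sum_le_sum_abs _ _
    _ ≤ ∑ _j : Fin n, 4 * ν := Finset.sum_le_sum (fun j _ => Hmat_abs_le k hbdd sp i j)
    _ = 4 * ν * n := by simp [Finset.sum_const, Finset.card_univ]; ring
  have hA : |∑ i, (∑ j, Hmat k sp i j) ^ 2| ≤ (4 * ν * n)^2 * n := by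
    calc |∑ i, (∑ j, Hmat k sp i j) ^ 2| ≤ ∑ i, |(∑ j, Hmat k sp i j) ^ 2| :=
      Finset.abs_sum_le_sum_abs _ _
    _ ≤ ∑ _i : Fin n, (4 * ν * n)^2 := by
        apply Finset.sum_le_sum
        intro i _
        rw [abs_pow]
        have := hR i
        have := abs_nonneg (∑ j, Hmat k sp i j)
        nlinarith
    _ = (4 * ν * n)^2 * n := by simp [Finset.sum_const, Finset.card_univ]; ring
  have hS : |∑ i, ∑ j, Hmat k sp i j| ≤ 4 * ν * n * n := by
    calc |∑ i, ∑ j, Hmat k sp i j| ≤ ∑ i, |∑ j, Hmat k sp i j| := Finset.abs_sum_le_sum_abs _ _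
    _ ≤ ∑ _i : Fin n, 4 * ν * n := Finset.sum_le_sum (fun i _ => hR i)
    _ = 4 * ν * n * n := by simp [Finset.sum_const, Finset.card_univ]; ring
  have hnp : (1:ℝ) ≤ n := by exact_mod_cast hn
  have hnp0 : (0:ℝ) < n := by linarith
  set A := ∑ i, (∑ j, Hmat k sp i j) ^ 2 with hAdef
  set S := ∑ i, ∑ j, Hmat k sp i j with hSdef
  have hAnn : 0 ≤ A := Finset.sum_nonneg (fun i _ => sq_nonneg _)
  have h1 : (1 / (n:ℝ)^3) * A ≤ 16 * ν^2 := by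
    rw [abs_of_nonneg hAnn] at hA
    rw [div_mul_eq_mul_div, div_le_iff₀ (by positivity)]
    nlinarith
  have h2 : (1 / (n:ℝ)^4) * S^2 ≤ 16 * ν^2 := by
    have : S^2 ≤ (4*ν*n*n)^2 := by
      have := abs_le.mp hS
      nlinarith [abs_nonneg S, hS]
    rw [div_mul_eq_mul_div, div_le_iff₀ (by positivity)]
    nlinarith
  have h1' : 0 ≤ (1 / (n:ℝ)^3) * A := by positivity
  have h2' : 0 ≤ (1 / (n:ℝ)^4) * S^2 := by positivity
  rw [sigmaHatSq, abs_le]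
  constructor <;> [nlinarith; nlinarith]

end HmatFacts

lemma Fdiff {n : ℕ} (hn : 1 ≤ n) {ν : ℝ} (hν : 0 ≤ ν) (H H' : Fin n → Fin n → ℝ) (m : Fin n)
    (hH : ∀ i j, |H i j| ≤ 4*ν) (hH' : ∀ i j, |H' i j| ≤ 4*ν)
    (hoff : ∀ i j, i ≠ m → j ≠ m → H' i j = H i j)
    (hrow : ∀ j, j ≠ m → |H' m j - H m j| ≤ 4*ν)
    (hcol : ∀ i, i ≠ m → |H' i m - H i m| ≤ 4*ν)
    (hdiag : |H' m m - H m m| ≤ 8*ν) :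
    |4 * ((1/(n:ℝ)^3) * ∑ i, (∑ j, H' i j)^2 - (1/(n:ℝ)^4) * (∑ i, ∑ j, H' i j)^2)
     - 4 * ((1/(n:ℝ)^3) * ∑ i, (∑ j, H i j)^2 - (1/(n:ℝ)^4) * (∑ i, ∑ j, H i j)^2)|
     ≤ 512 * ν^2 / n := by
  have hnp : (1:ℝ) ≤ n := by exact_mod_cast hn
  have hnp0 : (0:ℝ) < n := by linarith
  set R : Fin n → ℝ := fun i => ∑ j, H i j with hR
  set R' : Fin n → ℝ := fun i => ∑ j, H' i j with hR'
  have hcard : ((univ : Finset (Fin n)).erase m).card = n - 1 := by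
    rw [Finset.card_erase_of_mem (mem_univ m), Finset.card_univ, Fintype.card_fin]
  have hcardR : (((univ : Finset (Fin n)).erase m).card : ℝ) = (n:ℝ) - 1 := by
    rw [hcard, Nat.cast_sub hn, Nat.cast_one]
  have hRb : ∀ i, |R i| ≤ 4*ν*n := by
    intro i
    calc |R i| ≤ ∑ j, |H i j| := Finset.abs_sum_le_sum_abs _ _
    _ ≤ ∑ _j : Fin n, 4*ν := Finset.sum_le_sum (fun j _ => hH i j)
    _ = 4*ν*n := by simp [Finset.sum_const, Finset.card_univ]; ring
  have hR'b : ∀ i, |R' i| ≤ 4*ν*n := by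
    intro i
    calc |R' i| ≤ ∑ j, |H' i j| := Finset.abs_sum_le_sum_abs _ _
    _ ≤ ∑ _j : Fin n, 4*ν := Finset.sum_le_sum (fun j _ => hH' i j)
    _ = 4*ν*n := by simp [Finset.sum_const, Finset.card_univ]; ring
  have hdR : ∀ i, i ≠ m → |R' i - R i| ≤ 4*ν := by
    intro i him
    have : R' i - R i = H' i m - H i m := by
      rw [hR, hR', ← Finset.sum_sub_distrib]
      apply Finset.sum_eq_single_of_mem m (mem_univ m)
      intro j _ hj
      rw [hoff i j him hj]
      ring
    rw [this]
    exact hcol i him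
  have hdRm : |R' m - R m| ≤ 4*ν*n + 4*ν := by
    have h0 : R' m - R m = ∑ j, (H' m j - H m j) := by
      rw [hR, hR', ← Finset.sum_sub_distrib]
    rw [h0]
    calc |∑ j, (H' m j - H m j)| ≤ ∑ j, |H' m j - H m j| := Finset.abs_sum_le_sum_abs _ _
    _ = (∑ j ∈ univ.erase m, |H' m j - H m j|) + |H' m m - H m m| := by
        rw [Finset.sum_erase_add univ _ (mem_univ m)]
    _ ≤ (∑ _j ∈ univ.erase m, (4*ν)) + 8*ν := by
        apply add_le_add _ hdiag
        exact Finset.sum_le_sum (fun j hj => hrow j (Finset.ne_of_mem_erase hj))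
    _ = ((n:ℝ)-1) * (4*ν) + 8*ν := by rw [Finset.sum_const, nsmul_eq_mul, hcardR]
    _ ≤ 4*ν*n + 4*ν := by nlinarith
  have hsumsq : |∑ i, (R' i^2 - R i^2)| ≤ 64*ν^2*n^2 := by
    calc |∑ i, (R' i^2 - R i^2)| ≤ ∑ i, |R' i^2 - R i^2| := Finset.abs_sum_le_sum_abs _ _
    _ = (∑ i ∈ univ.erase m, |R' i^2 - R i^2|) + |R' m^2 - R m^2| := by
        rw [Finset.sum_erase_add univ _ (mem_univ m)]
    _ ≤ (∑ _i ∈ univ.erase m, (4*ν) * (8*ν*n)) + (4*ν*n + 4*ν) * (8*ν*n) := by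
        apply add_le_add
        · apply Finset.sum_le_sum
          intro i hi
          have h1 : R' i^2 - R i^2 = (R' i - R i) * (R' i + R i) := by ring
          rw [h1, abs_mul]
          apply mul_le_mul (hdR i (Finset.ne_of_mem_erase hi)) _ (abs_nonneg _) (by positivity)
          calc |R' i + R i| ≤ |R' i| + |R i| := abs_add_le _ _
          _ ≤ 8*ν*n := by linarith [hRb i, hR'b i]
        · have h1 : R' m^2 - R m^2 = (R' m - R m) * (R' m + R m) := by ring
          rw [h1, abs_mul]
          apply mul_le_mul hdRm _ (abs_nonneg _) (by positivity)
          calc |R' m + R m| ≤ |R' m| + |R m| := abs_add_le _ _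
          _ ≤ 8*ν*n := by linarith [hRb m, hR'b m]
    _ = ((n:ℝ)-1) * ((4*ν) * (8*ν*n)) + (4*ν*n + 4*ν) * (8*ν*n) := by
        rw [Finset.sum_const, nsmul_eq_mul, hcardR]
    _ ≤ 64*ν^2*n^2 := by nlinarith
  have hdS : |∑ i, R' i - ∑ i, R i| ≤ 8*ν*n := by
    rw [← Finset.sum_sub_distrib]
    calc |∑ i, (R' i - R i)| ≤ ∑ i, |R' i - R i| := Finset.abs_sum_le_sum_abs _ _
    _ = (∑ i ∈ univ.erase m, |R' i - R i|) + |R' m - R m| := by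
        rw [Finset.sum_erase_add univ _ (mem_univ m)]
    _ ≤ (∑ _i ∈ univ.erase m, (4*ν)) + (4*ν*n + 4*ν) := by
        apply add_le_add _ hdRm
        exact Finset.sum_le_sum (fun i hi => hdR i (Finset.ne_of_mem_erase hi))
    _ = ((n:ℝ)-1) * (4*ν) + (4*ν*n + 4*ν) := by rw [Finset.sum_const, nsmul_eq_mul, hcardR]
    _ = 8*ν*n := by ring
  have hSb : |∑ i, R i| ≤ 4*ν*n*n := by
    calc |∑ i, R i| ≤ ∑ i, |R i| := Finset.abs_sum_le_sum_abs _ _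
    _ ≤ ∑ _i : Fin n, 4*ν*n := Finset.sum_le_sum (fun i _ => hRb i)
    _ = 4*ν*n*n := by simp [Finset.sum_const, Finset.card_univ]; ring
  have hS'b : |∑ i, R' i| ≤ 4*ν*n*n := by
    calc |∑ i, R' i| ≤ ∑ i, |R' i| := Finset.abs_sum_le_sum_abs _ _
    _ ≤ ∑ _i : Fin n, 4*ν*n := Finset.sum_le_sum (fun i _ => hR'b i)
    _ = 4*ν*n*n := by simp [Finset.sum_const, Finset.card_univ]; ring
  have hdS2 : |(∑ i, R' i)^2 - (∑ i, R i)^2| ≤ 64*ν^2*n^3 := by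
    have h1 : (∑ i, R' i)^2 - (∑ i, R i)^2
        = ((∑ i, R' i) - (∑ i, R i)) * ((∑ i, R' i) + (∑ i, R i)) := by ring
    rw [h1, abs_mul]
    calc |(∑ i, R' i) - (∑ i, R i)| * |(∑ i, R' i) + (∑ i, R i)|
        ≤ (8*ν*n) * (8*ν*n*n) := by
          apply mul_le_mul hdS _ (abs_nonneg _) (by positivity)
          calc |(∑ i, R' i) + (∑ i, R i)| ≤ |∑ i, R' i| + |∑ i, R i| := abs_add_le _ _
          _ ≤ 8*ν*n*n := by linarith
    _ = 64*ν^2*n^3 := by ring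
  -- rewrite row sums of H' as R' etc.
  have hSrw : ∀ i : Fin n, ∑ j, H i j = R i := fun i => rfl
  have hSrw' : ∀ i : Fin n, ∑ j, H' i j = R' i := fun i => rfl
  simp_rw [hSrw, hSrw']
  have hkey : 4 * ((1/(n:ℝ)^3) * ∑ i, R' i^2 - (1/(n:ℝ)^4) * (∑ i, R' i)^2)
      - 4 * ((1/(n:ℝ)^3) * ∑ i, R i^2 - (1/(n:ℝ)^4) * (∑ i, R i)^2)
      = 4 * ((1/(n:ℝ)^3) * (∑ i, (R' i^2 - R i^2))
        - (1/(n:ℝ)^4) * ((∑ i, R' i)^2 - (∑ i, R i)^2)) := by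
    rw [Finset.sum_sub_distrib]
    ring
  rw [hkey]
  have e1 : |(1/(n:ℝ)^3) * (∑ i, (R' i^2 - R i^2))| ≤ 64*ν^2/n := by
    rw [abs_mul, abs_of_nonneg (by positivity : (0:ℝ) ≤ 1/(n:ℝ)^3)]
    rw [div_eq_mul_inv, one_mul, inv_mul_le_iff₀ (by positivity)]
    calc |∑ i, (R' i^2 - R i^2)| ≤ 64*ν^2*n^2 := hsumsq
    _ = (n:ℝ)^3 * (64 * ν^2 / n) := by field_simp
  have e2 : |(1/(n:ℝ)^4) * ((∑ i, R' i)^2 - (∑ i, R i)^2)| ≤ 64*ν^2/n := by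
    rw [abs_mul, abs_of_nonneg (by positivity : (0:ℝ) ≤ 1/(n:ℝ)^4)]
    rw [div_eq_mul_inv, one_mul, inv_mul_le_iff₀ (by positivity)]
    calc |(∑ i, R' i)^2 - (∑ i, R i)^2| ≤ 64*ν^2*n^3 := hdS2
    _ = (n:ℝ)^4 * (64 * ν^2 / n) := by field_simp
  calc |4 * ((1/(n:ℝ)^3) * (∑ i, (R' i^2 - R i^2))
        - (1/(n:ℝ)^4) * ((∑ i, R' i)^2 - (∑ i, R i)^2))|
      = 4 * |(1/(n:ℝ)^3) * (∑ i, (R' i^2 - R i^2))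
        - (1/(n:ℝ)^4) * ((∑ i, R' i)^2 - (∑ i, R i)^2)| := by
        rw [abs_mul]; norm_num
  _ ≤ 4 * (|(1/(n:ℝ)^3) * (∑ i, (R' i^2 - R i^2))|
        + |(1/(n:ℝ)^4) * ((∑ i, R' i)^2 - (∑ i, R i)^2)|) := by
        have := abs_sub ((1/(n:ℝ)^3) * (∑ i, (R' i^2 - R i^2)))
          ((1/(n:ℝ)^4) * ((∑ i, R' i)^2 - (∑ i, R i)^2))
        linarith
  _ ≤ 4 * (64*ν^2/n + 64*ν^2/n) := by linarith
  _ = 512 * ν^2 / n := by ring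

lemma sigma_diffX {𝓧 : Type*} {n : ℕ} (k : 𝓧 → 𝓧 → ℝ) {ν : ℝ}
    (hbdd : ∀ x y, |k x y| ≤ ν) (hn : 1 ≤ n)
    (X Y : Fin n → 𝓧) (m : Fin n) (z : 𝓧) :
    |sigmaHatSq k (Function.update X m z, Y) - sigmaHatSq k (X, Y)| ≤ 512 * ν^2 / n := by
  have hν : 0 ≤ ν := nu_nonneg k hbdd z
  have main := Fdiff hn hν (fun i j => Hmat k (X, Y) i j)
    (fun i j => Hmat k (Function.update X m z, Y) i j) m
    (fun i j => Hmat_abs_le k hbdd _ i j) (fun i j => Hmat_abs_le k hbdd _ i j)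
    (by
      intro i j hi hj
      simp [Hmat, Function.update_of_ne hi, Function.update_of_ne hj])
    (by
      intro j hj
      simp only [Hmat, Function.update_self, Function.update_of_ne hj]
      have h1 := abs_le.mp (hbdd z (X j))
      have h2 := abs_le.mp (hbdd (X m) (X j))
      have h3 := abs_le.mp (hbdd z (Y j))
      have h4 := abs_le.mp (hbdd (X m) (Y j))
      rw [abs_le]
      constructor <;> linarith [h1.1, h1.2, h2.1, h2.2, h3.1, h3.2, h4.1, h4.2])
    (by
      intro i hi
      simp only [Hmat, Function.update_self, Function.update_of_ne hi]
      have h1 := abs_le.mp (hbdd (X i) z)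
      have h2 := abs_le.mp (hbdd (X i) (X m))
      have h3 := abs_le.mp (hbdd z (Y i))
      have h4 := abs_le.mp (hbdd (X m) (Y i))
      rw [abs_le]
      constructor <;> linarith [h1.1, h1.2, h2.1, h2.2, h3.1, h3.2, h4.1, h4.2])
    (by
      simp only [Hmat, Function.update_self]
      have h1 := abs_le.mp (hbdd z z)
      have h2 := abs_le.mp (hbdd (X m) (X m))
      have h3 := abs_le.mp (hbdd z (Y m))
      have h4 := abs_le.mp (hbdd (X m) (Y m))
      rw [abs_le]
      constructor <;> linarith [h1.1, h1.2, h2.1, h2.2, h3.1, h3.2, h4.1, h4.2])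
  simpa only [sigmaHatSq] using main

lemma sigma_diffY {𝓧 : Type*} {n : ℕ} (k : 𝓧 → 𝓧 → ℝ) {ν : ℝ}
    (hbdd : ∀ x y, |k x y| ≤ ν) (hn : 1 ≤ n)
    (X Y : Fin n → 𝓧) (m : Fin n) (z : 𝓧) :
    |sigmaHatSq k (X, Function.update Y m z) - sigmaHatSq k (X, Y)| ≤ 512 * ν^2 / n := by
  have hν : 0 ≤ ν := nu_nonneg k hbdd z
  have main := Fdiff hn hν (fun i j => Hmat k (X, Y) i j)
    (fun i j => Hmat k (X, Function.update Y m z) i j) m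
    (fun i j => Hmat_abs_le k hbdd _ i j) (fun i j => Hmat_abs_le k hbdd _ i j)
    (by
      intro i j hi hj
      simp [Hmat, Function.update_of_ne hi, Function.update_of_ne hj])
    (by
      intro j hj
      simp only [Hmat, Function.update_self, Function.update_of_ne hj]
      have h1 := abs_le.mp (hbdd z (Y j))
      have h2 := abs_le.mp (hbdd (Y m) (Y j))
      have h3 := abs_le.mp (hbdd (X j) z)
      have h4 := abs_le.mp (hbdd (X j) (Y m))
      rw [abs_le]
      constructor <;> linarith [h1.1, h1.2, h2.1, h2.2, h3.1, h3.2, h4.1, h4.2])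
    (by
      intro i hi
      simp only [Hmat, Function.update_self, Function.update_of_ne hi]
      have h1 := abs_le.mp (hbdd (Y i) z)
      have h2 := abs_le.mp (hbdd (Y i) (Y m))
      have h3 := abs_le.mp (hbdd (X i) z)
      have h4 := abs_le.mp (hbdd (X i) (Y m))
      rw [abs_le]
      constructor <;> linarith [h1.1, h1.2, h2.1, h2.2, h3.1, h3.2, h4.1, h4.2])
    (by
      simp only [Hmat, Function.update_self]
      have h1 := abs_le.mp (hbdd z z)
      have h2 := abs_le.mp (hbdd (Y m) (Y m))
      have h3 := abs_le.mp (hbdd (X m) z)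
      have h4 := abs_le.mp (hbdd (X m) (Y m))
      rw [abs_le]
      constructor <;> linarith [h1.1, h1.2, h2.1, h2.2, h3.1, h3.2, h4.1, h4.2])
  simpa only [sigmaHatSq] using main


lemma mgf_full {𝓧 : Type*} [MeasurableSpace 𝓧] (P Q : Measure 𝓧)
    [IsProbabilityMeasure P] [IsProbabilityMeasure Q] (n : ℕ)
    (G : (Fin n → 𝓧) × (Fin n → 𝓧) → ℝ) (hG : Measurable G) (C : ℝ) (hC : ∀ sp, |G sp| ≤ C)
    (c lam : ℝ) (hc : 0 ≤ c) (hlam : 0 ≤ lam) (hlc : lam * c ≤ 1)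
    (hdX : ∀ X Y m z, |G (Function.update X m z, Y) - G (X, Y)| ≤ c)
    (hdY : ∀ X Y m z, |G (X, Function.update Y m z) - G (X, Y)| ≤ c) :
    ∫ sp, Real.exp (lam * G sp) ∂(sampleMeasure P Q n) ≤
      Real.exp ((2*(n:ℝ)) * (3/16 * (lam^2 * c^2))) *
        Real.exp (lam * ∫ sp, G sp ∂(sampleMeasure P Q n)) := by
  unfold sampleMeasure
  set πP := Measure.pi (fun _ : Fin n => P) with hπP
  set πQ := Measure.pi (fun _ : Fin n => Q) with hπQ
  haveI : IsProbabilityMeasure πP := by rw [hπP]; infer_instance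
  haveI : IsProbabilityMeasure πQ := by rw [hπQ]; infer_instance
  have hsecQ : ∀ X, Measurable (fun Y => G (X, Y)) :=
    fun X => hG.comp measurable_prodMk_left
  have hintsec : ∀ X, Integrable (fun Y => G (X, Y)) πQ :=
    fun X => integrable_of_bdd (hsecQ X) C (fun Y => hC _)
  have key := prodStep πP πQ G hG C hC lam
    (Real.exp ((n:ℝ) * (3/16 * (lam^2 * c^2))))
    (Real.exp ((n:ℝ) * (3/16 * (lam^2 * c^2))))
    (Real.exp_pos _).le
    (by
      intro X
      exact lemA n (fun _ => Q) (fun _ => inferInstance) (fun Y => G (X, Y)) (hsecQ X)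
        C (fun Y => hC _) c lam hc hlam hlc (fun Y j z => hdY X Y j z))
    (by
      have hgm : Measurable (fun X => ∫ Y, G (X, Y) ∂πQ) :=
        (hG.stronglyMeasurable.integral_prod_right').measurable
      have hgbd : ∀ X, |∫ Y, G (X, Y) ∂πQ| ≤ C := by
        intro X
        rw [← Real.norm_eq_abs]
        calc ‖∫ Y, G (X, Y) ∂πQ‖ ≤ C * (πQ Set.univ).toReal :=
          norm_integral_le_of_norm_le_const (ae_of_all _ (fun Y => by
            rw [Real.norm_eq_abs]; exact hC (X, Y)))
        _ = C := by simp
      have hgdiff : ∀ (X : Fin n → 𝓧) (m : Fin n) (z : 𝓧),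
          |(∫ Y, G (Function.update X m z, Y) ∂πQ) - ∫ Y, G (X, Y) ∂πQ| ≤ c := by
        intro X m z
        rw [← integral_sub (hintsec _) (hintsec _), ← Real.norm_eq_abs]
        calc ‖∫ Y, (G (Function.update X m z, Y) - G (X, Y)) ∂πQ‖
            ≤ c * (πQ Set.univ).toReal :=
          norm_integral_le_of_norm_le_const (ae_of_all _ (fun Y => by
            rw [Real.norm_eq_abs]; exact hdX X Y m z))
        _ = c := by simp
      exact lemA n (fun _ => P) (fun _ => inferInstance) (fun X => ∫ Y, G (X, Y) ∂πQ)
        hgm C hgbd c lam hc hlam hlc hgdiff)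
  calc ∫ sp, Real.exp (lam * G sp) ∂(πP.prod πQ)
      ≤ Real.exp ((n:ℝ) * (3/16 * (lam^2 * c^2))) *
          Real.exp ((n:ℝ) * (3/16 * (lam^2 * c^2))) *
          Real.exp (lam * ∫ sp, G sp ∂(πP.prod πQ)) := key
  _ = Real.exp ((2*(n:ℝ)) * (3/16 * (lam^2 * c^2))) *
        Real.exp (lam * ∫ sp, G sp ∂(πP.prod πQ)) := by
      rw [← Real.exp_add]
      congr 1
      ring


/-- McDiarmid concentration of the variance estimator `σ̂²` around its mean for a
fixed bounded symmetric kernel. -/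
theorem sigmaHatSq_concentration {𝓧 : Type*} [MeasurableSpace 𝓧]
    (k : 𝓧 → 𝓧 → ℝ) (hsymm : ∀ x y, k x y = k y x)
    (hmeas : Measurable fun p : 𝓧 × 𝓧 => k p.1 p.2)
    (ν : ℝ) (hbdd : ∀ x y, |k x y| ≤ ν)
    (P Q : Measure 𝓧) [IsProbabilityMeasure P] [IsProbabilityMeasure Q]
    (n : ℕ) (hn : 1 ≤ n) (δ : ℝ) (hδ : 0 < δ) (hδ1 : δ < 1) :
    ENNReal.ofReal (1 - δ) ≤
      sampleMeasure P Q n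
        {sp | |sigmaHatSq k sp - ∫ sp', sigmaHatSq k sp' ∂(sampleMeasure P Q n)| ≤
          448 * ν ^ 2 * Real.sqrt ((2 / (n : ℝ)) * Real.log (2 / δ))} := by
  haveI : IsProbabilityMeasure (sampleMeasure P Q n) := by
    unfold sampleMeasure; infer_instance
  set μf := sampleMeasure P Q n with hμf
  set f : (Fin n → 𝓧) × (Fin n → 𝓧) → ℝ := sigmaHatSq k with hf
  have hfm : Measurable f := sigmaHatSq_meas k hmeas
  have hfb : ∀ sp, |f sp| ≤ 128 * ν^2 := fun sp => sigmaHatSq_abs_le k hbdd hn sp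
  have hintf : Integrable f μf := integrable_of_bdd hfm _ hfb
  set I := ∫ sp, f sp ∂μf with hI
  have hIb : |I| ≤ 128 * ν^2 := by
    rw [← Real.norm_eq_abs]
    calc ‖I‖ ≤ 128 * ν^2 * (μf Set.univ).toReal :=
      norm_integral_le_of_norm_le_const (ae_of_all _ (fun sp => by
        rw [Real.norm_eq_abs]; exact hfb sp))
    _ = 128 * ν^2 := by simp
  set L := Real.log (2 / δ) with hLdef
  have hL : 0 ≤ L := Real.log_nonneg (by rw [le_div_iff₀ hδ]; linarith)
  set s := Real.sqrt ((2 / (n:ℝ)) * L) with hsdef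
  have hs0 : 0 ≤ s := Real.sqrt_nonneg _
  set t := 448 * ν ^ 2 * s with htdef
  have hne : Nonempty 𝓧 := by
    by_contra h
    rw [not_nonempty_iff] at h
    have h1 := measure_univ (μ := P)
    rw [Set.univ_eq_empty_iff.mpr h] at h1
    simp at h1
  have hν0 : 0 ≤ ν := nu_nonneg k hbdd (Classical.arbitrary _)
  have ht0 : 0 ≤ t := by positivity
  by_cases hcase : 256 * ν^2 ≤ t
  · -- easy case : the bound holds almost surely
    have hall : ∀ sp, |f sp - I| ≤ t := by
      intro sp
      calc |f sp - I| ≤ |f sp| + |I| := abs_sub _ _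
      _ ≤ 256 * ν^2 := by linarith [hfb sp]
      _ ≤ t := hcase
    have huniv : {sp | |f sp - I| ≤ t} = Set.univ := Set.eq_univ_of_forall hall
    rw [huniv, measure_univ]
    exact ENNReal.ofReal_le_one.mpr (by linarith)
  · -- hard case : Chernoff + McDiarmid
    push_neg at hcase
    have hνpos : 0 < ν := by
      rcases lt_or_eq_of_le hν0 with h | h
      · exact h
      · exfalso
        rw [← h] at hcase
        simp at hcase
        nlinarith
    have hn1 : (1:ℝ) ≤ n := by exact_mod_cast hn
    have hnpos : (0:ℝ) < n := by linarith
    set c : ℝ := 512 * ν^2 / n with hcdef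
    have hc0 : 0 ≤ c := by positivity
    set lam : ℝ := 7 * s * n / (3072 * ν^2) with hlamdef
    have hlam0 : 0 ≤ lam := by positivity
    have hs47 : s < 4 / 7 := by
      have : 448 * ν^2 * s < 256 * ν^2 := hcase
      nlinarith
    have hlc : lam * c ≤ 1 := by
      have hlceq : lam * c = 7 * s / 6 := by
        rw [hlamdef, hcdef]
        field_simp
        ring
      rw [hlceq]
      linarith
    have hs2 : s^2 = 2 / n * L := Real.sq_sqrt (by positivity)
    -- the exponent is at most -L
    have hexp : (2*(n:ℝ)) * (3/16 * (lam^2 * c^2)) - lam * t ≤ -L := by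
      have he1 : (2*(n:ℝ)) * (3/16 * (lam^2 * c^2)) - lam * t = -(49/96) * ((n:ℝ) * s^2) := by
        rw [hlamdef, hcdef, htdef]
        field_simp
        ring
      have he2 : (n:ℝ) * s^2 = 2 * L := by
        rw [hs2]
        field_simp
      rw [he1, he2]
      linarith
    have hexpδ : Real.exp ((2*(n:ℝ)) * (3/16 * (lam^2 * c^2)) - lam * t) ≤ δ / 2 := by
      calc Real.exp ((2*(n:ℝ)) * (3/16 * (lam^2 * c^2)) - lam * t) ≤ Real.exp (-L) :=
        Real.exp_le_exp.mpr hexp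
      _ = δ / 2 := by
          rw [hLdef, Real.exp_neg, Real.exp_log (by positivity), inv_div]
    -- mgf bounds
    have hmgf_pos := mgf_full P Q n f hfm (128 * ν^2) hfb c lam hc0 hlam0 hlc
      (fun X Y m z => sigma_diffX k hbdd hn X Y m z)
      (fun X Y m z => sigma_diffY k hbdd hn X Y m z)
    have hmgf_neg := mgf_full P Q n (fun sp => -f sp) (hfm.neg) (128 * ν^2)
      (fun sp => by rw [abs_neg]; exact hfb sp) c lam hc0 hlam0 hlc
      (fun X Y m z => by
        simp only [neg_sub_neg]
        rw [abs_sub_comm]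
        exact sigma_diffX k hbdd hn X Y m z)
      (fun X Y m z => by
        simp only [neg_sub_neg]
        rw [abs_sub_comm]
        exact sigma_diffY k hbdd hn X Y m z)
    have hintexp_pos : Integrable (fun sp => Real.exp (lam * f sp)) μf :=
      integrable_of_bdd ((hfm.const_mul lam).exp) (Real.exp (lam * (128 * ν^2))) (fun sp => by
        rw [abs_of_pos (Real.exp_pos _)]
        apply Real.exp_le_exp.mpr
        exact mul_le_mul_of_nonneg_left (le_trans (le_abs_self _) (hfb sp)) hlam0)
    have hintexp_neg : Integrable (fun sp => Real.exp (lam * (-f sp))) μf :=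
      integrable_of_bdd (((hfm.neg).const_mul lam).exp) (Real.exp (lam * (128 * ν^2))) (fun sp => by
        rw [abs_of_pos (Real.exp_pos _)]
        apply Real.exp_le_exp.mpr
        apply mul_le_mul_of_nonneg_left _ hlam0
        calc -f sp ≤ |(-f sp)| := le_abs_self _
        _ = |f sp| := abs_neg _
        _ ≤ 128 * ν^2 := hfb sp)
    -- Chernoff, upper tail
    have hA : μf {sp | I + t ≤ f sp} ≤ ENNReal.ofReal (δ / 2) := by
      have hch := ProbabilityTheory.measure_ge_le_exp_mul_mgf (μ := μf) (X := f)
        (I + t) hlam0 hintexp_pos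
      have hmgfle : ProbabilityTheory.mgf f μf lam ≤
          Real.exp ((2*(n:ℝ)) * (3/16 * (lam^2 * c^2))) * Real.exp (lam * I) := hmgf_pos
      have htr : (μf {sp | I + t ≤ f sp}).toReal ≤ δ / 2 := by
        calc (μf {sp | I + t ≤ f sp}).toReal
            ≤ Real.exp (-lam * (I + t)) * ProbabilityTheory.mgf f μf lam := hch
        _ ≤ Real.exp (-lam * (I + t)) *
              (Real.exp ((2*(n:ℝ)) * (3/16 * (lam^2 * c^2))) * Real.exp (lam * I)) :=
            mul_le_mul_of_nonneg_left hmgfle (Real.exp_pos _).le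
        _ = Real.exp ((2*(n:ℝ)) * (3/16 * (lam^2 * c^2)) - lam * t) := by
            rw [← Real.exp_add, ← Real.exp_add]
            congr 1
            ring
        _ ≤ δ / 2 := hexpδ
      rw [← ENNReal.ofReal_toReal (measure_ne_top μf _)]
      exact ENNReal.ofReal_le_ofReal htr
    -- Chernoff, lower tail
    have hB : μf {sp | -I + t ≤ -f sp} ≤ ENNReal.ofReal (δ / 2) := by
      have hch := ProbabilityTheory.measure_ge_le_exp_mul_mgf (μ := μf)
        (X := fun sp => -f sp) (-I + t) hlam0 hintexp_neg
      have hInt : ∫ sp, -f sp ∂μf = -I := by rw [integral_neg]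
      have hmgfle : ProbabilityTheory.mgf (fun sp => -f sp) μf lam ≤
          Real.exp ((2*(n:ℝ)) * (3/16 * (lam^2 * c^2))) * Real.exp (lam * (-I)) := by
        have := hmgf_neg
        rw [hInt] at this
        exact this
      have htr : (μf {sp | -I + t ≤ -f sp}).toReal ≤ δ / 2 := by
        calc (μf {sp | -I + t ≤ -f sp}).toReal
            ≤ Real.exp (-lam * (-I + t)) * ProbabilityTheory.mgf (fun sp => -f sp) μf lam := hch
        _ ≤ Real.exp (-lam * (-I + t)) *
              (Real.exp ((2*(n:ℝ)) * (3/16 * (lam^2 * c^2))) * Real.exp (lam * (-I))) :=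
            mul_le_mul_of_nonneg_left hmgfle (Real.exp_pos _).le
        _ = Real.exp ((2*(n:ℝ)) * (3/16 * (lam^2 * c^2)) - lam * t) := by
            rw [← Real.exp_add, ← Real.exp_add]
            congr 1
            ring
        _ ≤ δ / 2 := hexpδ
      rw [← ENNReal.ofReal_toReal (measure_ne_top μf _)]
      exact ENNReal.ofReal_le_ofReal htr
    -- union bound
    have hsub : {sp | |f sp - I| ≤ t}ᶜ ⊆ {sp | I + t ≤ f sp} ∪ {sp | -I + t ≤ -f sp} := by
      intro sp hsp
      simp only [Set.mem_compl_iff, Set.mem_setOf_eq, not_le] at hsp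
      rcases lt_abs.mp hsp with h | h
      · left
        simp only [Set.mem_setOf_eq]
        linarith
      · right
        simp only [Set.mem_setOf_eq]
        linarith
    have hbad : μf {sp | |f sp - I| ≤ t}ᶜ ≤ ENNReal.ofReal δ := by
      calc μf {sp | |f sp - I| ≤ t}ᶜ ≤ μf ({sp | I + t ≤ f sp} ∪ {sp | -I + t ≤ -f sp}) :=
        measure_mono hsub
      _ ≤ μf {sp | I + t ≤ f sp} + μf {sp | -I + t ≤ -f sp} := measure_union_le _ _
      _ ≤ ENNReal.ofReal (δ / 2) + ENNReal.ofReal (δ / 2) := add_le_add hA hB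
      _ = ENNReal.ofReal δ := by
          rw [← ENNReal.ofReal_add (by positivity) (by positivity)]
          norm_num
    have hmeasS : MeasurableSet {sp | |f sp - I| ≤ t} :=
      measurableSet_le ((hfm.sub measurable_const).abs) measurable_const
    have h1 : μf {sp | |f sp - I| ≤ t} + μf {sp | |f sp - I| ≤ t}ᶜ = 1 := by
      rw [measure_add_measure_compl hmeasS, measure_univ]
    have h2 : ENNReal.ofReal (1 - δ) + μf {sp | |f sp - I| ≤ t}ᶜ ≤
        μf {sp | |f sp - I| ≤ t} + μf {sp | |f sp - I| ≤ t}ᶜ := by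
      rw [h1]
      calc ENNReal.ofReal (1 - δ) + μf {sp | |f sp - I| ≤ t}ᶜ
          ≤ ENNReal.ofReal (1 - δ) + ENNReal.ofReal δ := add_le_add_right hbad _
      _ = ENNReal.ofReal 1 := by
          rw [← ENNReal.ofReal_add (by linarith) (by positivity)]
          norm_num
      _ = 1 := by simp
    exact (ENNReal.add_le_add_iff_right (measure_ne_top μf _)).mp h2
end
end

section
/- Let k be a fixed symmetric kernel with |k(x,y)| ≤ ν for all x, y. Then the variance estimator satisfies | E[σ̂_k²] − σ_k² | ≤ 1152·ν²/n, where σ_k² = 4·( E[H_{12}·H_{13}] − E[H_{12}]² ). -/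
open MeasureTheory Finset

noncomputable section

section AuxMMD
variable {E : Type*} [MeasurableSpace E]

lemma integrable_of_bound {α : Type*} [MeasurableSpace α] (μ : Measure α) [IsFiniteMeasure μ]
    (f : α → ℝ) (hf : AEStronglyMeasurable f μ) (C : ℝ) (hb : ∀ x, |f x| ≤ C) :
    Integrable f μ :=
  Integrable.mono' (integrable_const C) hf
    (Filter.Eventually.of_forall (by simpa [Real.norm_eq_abs] using hb))

lemma measurePreserving_comp_inj {m n : ℕ} (μ : Measure E) [IsProbabilityMeasure μ]
    (e : Fin m → Fin n) (he : Function.Injective e) :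
    MeasurePreserving (fun (z : Fin n → E) (l : Fin m) => z (e l))
      (Measure.pi fun _ => μ) (Measure.pi fun _ => μ) := by
  classical
  have hmeas : Measurable (fun (z : Fin n → E) (l : Fin m) => z (e l)) :=
    measurable_pi_lambda _ fun l => measurable_pi_apply _
  refine ⟨hmeas, ?_⟩
  refine (Measure.pi_eq fun s hs => ?_).symm
  rw [Measure.map_apply hmeas (MeasurableSet.univ_pi hs)]
  have hpre : (fun (z : Fin n → E) (l : Fin m) => z (e l)) ⁻¹' (Set.pi Set.univ s)
      = Set.pi Set.univ (fun j => if h : ∃ l, e l = j then s h.choose else Set.univ) := by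
    ext z
    simp only [Set.mem_preimage, Set.mem_pi, Set.mem_univ, true_implies]
    constructor
    · intro hz j
      split_ifs with h
      · have hc := h.choose_spec
        exact Set.mem_of_eq_of_mem (congrArg z hc).symm (hz h.choose)
      · trivial
    · intro hz l
      have h : ∃ l', e l' = e l := ⟨l, rfl⟩
      have hz' := hz (e l)
      rw [dif_pos h] at hz'
      have hcl : h.choose = l := he h.choose_spec
      rwa [hcl] at hz'
  rw [hpre, Measure.pi_pi]
  rw [← Finset.prod_subset (Finset.subset_univ (Finset.image e Finset.univ))
    (fun j _ hj => ?_)]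
  · rw [Finset.prod_image (fun x _ y _ hxy => he hxy)]
    refine Finset.prod_congr rfl fun l _ => ?_
    have h : ∃ l', e l' = e l := ⟨l, rfl⟩
    rw [dif_pos h, he h.choose_spec]
  · rw [dif_neg, measure_univ]
    rintro ⟨l, rfl⟩
    exact hj (Finset.mem_image_of_mem e (Finset.mem_univ l))

lemma integral_pi_succ {m : ℕ} (μ : Measure E) [IsProbabilityMeasure μ]
    (f : (Fin (m+1) → E) → ℝ) (hfm : Measurable f) (C : ℝ) (hb : ∀ z, |f z| ≤ C) :
    ∫ z, f z ∂(Measure.pi fun _ : Fin (m+1) => μ)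
      = ∫ x, ∫ w, f (Fin.cons x w) ∂(Measure.pi fun _ : Fin m => μ) ∂μ := by
  have h1 := measurePreserving_piFinSuccAbove (fun _ : Fin (m+1) => μ) 0
  set e := MeasurableEquiv.piFinSuccAbove (fun _ : Fin (m+1) => E) 0 with he
  have h2 : ∫ z, f z ∂(Measure.pi fun _ : Fin (m+1) => μ)
      = ∫ p : E × (Fin m → E), f (e.symm p) ∂(μ.prod (Measure.pi fun _ : Fin m => μ)) :=
    ((h1.symm e).integral_comp' f).symm
  rw [h2, MeasureTheory.integral_prod]
  · refine integral_congr_ae (Filter.Eventually.of_forall fun x => ?_)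
    refine integral_congr_ae (Filter.Eventually.of_forall fun w => ?_)
    have hsm : e.symm (x, w) = Fin.cons x w := by
      simp [he, MeasurableEquiv.piFinSuccAbove_symm_apply, Fin.insertNth_zero',
        Fin.consEquiv]
    show f (e.symm (x, w)) = f (Fin.cons x w)
    rw [hsm]
  · exact integrable_of_bound _ _ ((hfm.comp e.symm.measurable).aestronglyMeasurable) C
      (fun p => hb _)

lemma integral_pi_zero (μ : Measure E) [IsProbabilityMeasure μ]
    (f : (Fin 0 → E) → ℝ) :
    ∫ z, f z ∂(Measure.pi fun _ : Fin 0 => μ) = f (fun i => i.elim0) := by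
  rw [Measure.pi_of_empty _ (fun i => i.elim0), integral_dirac]

lemma meas_hz {N : ℕ} (h : E → E → ℝ) (hm : Measurable fun p : E × E => h p.1 p.2)
    (i j : Fin N) : Measurable fun z : Fin N → E => h (z i) (z j) := by
  have : (fun z : Fin N → E => h (z i) (z j))
      = (fun p : E × E => h p.1 p.2) ∘ (fun z => (z i, z j)) := rfl
  rw [this]
  exact hm.comp ((measurable_pi_apply i).prodMk (measurable_pi_apply j))

lemma meas_hzc {N : ℕ} (h : E → E → ℝ) (hm : Measurable fun p : E × E => h p.1 p.2)
    (x : E) (j : Fin N) : Measurable fun z : Fin N → E => h x (z j) := by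
  have : (fun z : Fin N → E => h x (z j))
      = (fun p : E × E => h p.1 p.2) ∘ (fun z => (x, z j)) := rfl
  rw [this]
  exact hm.comp (measurable_const.prodMk (measurable_pi_apply j))

lemma bound_prod (h : E → E → ℝ) (c : ℝ) (hb : ∀ u v, |h u v| ≤ c) (u v s t : E) :
    |h u v * h s t| ≤ c * c := by
  rw [abs_mul]
  exact mul_le_mul (hb u v) (hb s t) (abs_nonneg _) (le_trans (abs_nonneg _) (hb u v))

lemma meas_prod {N : ℕ} (h : E → E → ℝ) (hm : Measurable fun p : E × E => h p.1 p.2)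
    (i j a b : Fin N) :
    Measurable fun z : Fin N → E => h (z i) (z j) * h (z a) (z b) :=
  (meas_hz h hm i j).mul (meas_hz h hm a b)

lemma quad_integral (μ : Measure E) [IsProbabilityMeasure μ] (h : E → E → ℝ)
    (hm : Measurable fun p : E × E => h p.1 p.2) (c : ℝ) (hb : ∀ u v, |h u v| ≤ c) :
    ∫ z, h (z 0) (z 1) * h (z 2) (z 3) ∂(Measure.pi fun _ : Fin 4 => μ)
      = (∫ u, ∫ v, h u v ∂μ ∂μ) ^ 2 := by
  have e4 : ∫ z, h (z 0) (z 1) * h (z 2) (z 3) ∂(Measure.pi fun _ : Fin 4 => μ)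
      = ∫ x, ∫ w, h x (w 0) * h (w 1) (w 2) ∂(Measure.pi fun _ : Fin 3 => μ) ∂μ :=
    integral_pi_succ μ _ (meas_prod h hm 0 1 2 3) (c*c) (fun z => bound_prod h c hb _ _ _ _)
  have st3 : ∀ x : E, (∫ w, h x (w 0) * h (w 1) (w 2) ∂(Measure.pi fun _ : Fin 3 => μ))
      = ∫ y, ∫ v, h x y * h (v 0) (v 1) ∂(Measure.pi fun _ : Fin 2 => μ) ∂μ := fun x =>
    integral_pi_succ μ _ ((meas_hzc h hm x 0).mul
        (meas_hz h hm 1 2)) (c*c) (fun z => bound_prod h c hb _ _ _ _)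
  have st2 : ∀ x y : E, (∫ v, h x y * h (v 0) (v 1) ∂(Measure.pi fun _ : Fin 2 => μ))
      = ∫ s, ∫ t, h x y * h s (t 0) ∂(Measure.pi fun _ : Fin 1 => μ) ∂μ := fun x y =>
    integral_pi_succ μ _ (measurable_const.mul (meas_hz h hm 0 1)) (c*c)
      (fun z => bound_prod h c hb _ _ _ _)
  have st1 : ∀ x y s : E, (∫ t, h x y * h s (t 0) ∂(Measure.pi fun _ : Fin 1 => μ))
      = ∫ t, h x y * h s t ∂μ := by
    intro x y s
    rw [integral_pi_succ μ (fun t : Fin 1 → E => h x y * h s (t 0))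
      (measurable_const.mul (meas_hzc h hm s 0)) (c*c)
      (fun z => bound_prod h c hb _ _ _ _)]
    refine integral_congr_ae (Filter.Eventually.of_forall fun t => ?_)
    beta_reduce
    rw [integral_pi_zero μ]
    rfl
  rw [e4]
  simp only [st3, st2, st1]
  simp only [integral_const_mul]
  have key : ∀ x y : E, (∫ s, h x y * ∫ t, h s t ∂μ ∂μ) = h x y * ∫ s, ∫ t, h s t ∂μ ∂μ :=
    fun x y => integral_const_mul _ _
  simp only [key, integral_mul_const]
  ring

lemma triple_integral (μ : Measure E) [IsProbabilityMeasure μ] (h : E → E → ℝ)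
    (hm : Measurable fun p : E × E => h p.1 p.2) (c : ℝ) (hb : ∀ u v, |h u v| ≤ c) :
    ∫ z, h (z 0) (z 1) * h (z 0) (z 2) ∂(Measure.pi fun _ : Fin 3 => μ)
      = ∫ u, ∫ v, ∫ w, h u v * h u w ∂μ ∂μ ∂μ := by
  have e3 : ∫ z, h (z 0) (z 1) * h (z 0) (z 2) ∂(Measure.pi fun _ : Fin 3 => μ)
      = ∫ x, ∫ w, h x (w 0) * h x (w 1) ∂(Measure.pi fun _ : Fin 2 => μ) ∂μ :=
    integral_pi_succ μ _ (meas_prod h hm 0 1 0 2) (c*c) (fun z => bound_prod h c hb _ _ _ _)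
  have st2 : ∀ x : E, (∫ w, h x (w 0) * h x (w 1) ∂(Measure.pi fun _ : Fin 2 => μ))
      = ∫ v, ∫ t, h x v * h x (t 0) ∂(Measure.pi fun _ : Fin 1 => μ) ∂μ := fun x =>
    integral_pi_succ μ _ ((meas_hzc h hm x 0).mul (meas_hzc h hm x 1)) (c*c)
      (fun z => bound_prod h c hb _ _ _ _)
  have st1 : ∀ x v : E, (∫ t, h x v * h x (t 0) ∂(Measure.pi fun _ : Fin 1 => μ))
      = ∫ w, h x v * h x w ∂μ := by
    intro x v
    rw [integral_pi_succ μ (fun t : Fin 1 → E => h x v * h x (t 0))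
      (measurable_const.mul (meas_hzc h hm x 0)) (c*c)
      (fun z => bound_prod h c hb _ _ _ _)]
    refine integral_congr_ae (Filter.Eventually.of_forall fun t => ?_)
    beta_reduce
    rw [integral_pi_zero μ]
    rfl
  rw [e3]
  simp only [st2, st1]

lemma I_quad_eq {n : ℕ} (μ : Measure E) [IsProbabilityMeasure μ] (h : E → E → ℝ)
    (hm : Measurable fun p : E × E => h p.1 p.2) (c : ℝ) (hb : ∀ u v, |h u v| ≤ c)
    (i j a b : Fin n) (h1 : i ≠ j) (h2 : i ≠ a) (h3 : i ≠ b) (h4 : j ≠ a) (h5 : j ≠ b)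
    (h6 : a ≠ b) :
    ∫ z, h (z i) (z j) * h (z a) (z b) ∂(Measure.pi fun _ : Fin n => μ)
      = (∫ u, ∫ v, h u v ∂μ ∂μ) ^ 2 := by
  have he : Function.Injective ![i, j, a, b] := by
    intro u v huv; fin_cases u <;> fin_cases v <;> simp_all
  have mp := measurePreserving_comp_inj μ ![i, j, a, b] he
  have key : ∫ w, h (w 0) (w 1) * h (w 2) (w 3) ∂(Measure.pi fun _ : Fin 4 => μ)
      = ∫ z, h (z i) (z j) * h (z a) (z b) ∂(Measure.pi fun _ : Fin n => μ) := by
    rw [← mp.map_eq, integral_map mp.measurable.aemeasurable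
      (meas_prod h hm 0 1 2 3).aestronglyMeasurable]
    rfl
  rw [← key, quad_integral μ h hm c hb]

lemma I_triple_eq {n : ℕ} (μ : Measure E) [IsProbabilityMeasure μ] (h : E → E → ℝ)
    (hm : Measurable fun p : E × E => h p.1 p.2) (c : ℝ) (hb : ∀ u v, |h u v| ≤ c)
    (i j l : Fin n) (h1 : i ≠ j) (h2 : i ≠ l) (h3 : j ≠ l) :
    ∫ z, h (z i) (z j) * h (z i) (z l) ∂(Measure.pi fun _ : Fin n => μ)
      = ∫ u, ∫ v, ∫ w, h u v * h u w ∂μ ∂μ ∂μ := by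
  have he : Function.Injective ![i, j, l] := by
    intro u v huv; fin_cases u <;> fin_cases v <;> simp_all
  have mp := measurePreserving_comp_inj μ ![i, j, l] he
  have key : ∫ w, h (w 0) (w 1) * h (w 0) (w 2) ∂(Measure.pi fun _ : Fin 3 => μ)
      = ∫ z, h (z i) (z j) * h (z i) (z l) ∂(Measure.pi fun _ : Fin n => μ) := by
    rw [← mp.map_eq, integral_map mp.measurable.aemeasurable
      (meas_prod h hm 0 1 0 2).aestronglyMeasurable]
    rfl
  rw [← key, triple_integral μ h hm c hb]

lemma I_bound {n : ℕ} (μ : Measure E) [IsProbabilityMeasure μ] (h : E → E → ℝ)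
    (c : ℝ) (hb : ∀ u v, |h u v| ≤ c) (i j a b : Fin n) :
    |∫ z, h (z i) (z j) * h (z a) (z b) ∂(Measure.pi fun _ : Fin n => μ)| ≤ c * c := by
  have := norm_integral_le_of_norm_le_const (μ := Measure.pi fun _ : Fin n => μ) (C := c * c)
    (f := fun z : Fin n → E => h (z i) (z j) * h (z a) (z b))
    (Filter.Eventually.of_forall fun z => by
      simpa [Real.norm_eq_abs, ← abs_mul] using bound_prod h c hb (z i) (z j) (z a) (z b))
  simpa [Real.norm_eq_abs, measure_univ] using this

lemma eta_bound (μ : Measure E) [IsProbabilityMeasure μ] (h : E → E → ℝ)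
    (c : ℝ) (hb : ∀ u v, |h u v| ≤ c) :
    |∫ u, ∫ v, h u v ∂μ ∂μ| ≤ c := by
  have inner : ∀ u, |∫ v, h u v ∂μ| ≤ c := by
    intro u
    have := norm_integral_le_of_norm_le_const (μ := μ) (C := c) (f := fun v => h u v)
      (Filter.Eventually.of_forall fun v => by simpa [Real.norm_eq_abs] using hb u v)
    simpa [Real.norm_eq_abs, measure_univ] using this
  have := norm_integral_le_of_norm_le_const (μ := μ) (C := c) (f := fun u => ∫ v, h u v ∂μ)
    (Filter.Eventually.of_forall fun u => by simpa [Real.norm_eq_abs] using inner u)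
  simpa [Real.norm_eq_abs, measure_univ] using this

lemma filter_card_le {α β : Type*} [Fintype α] [Fintype β] (f : α → β)
    (p : α → Prop) [DecidablePred p]
    (hinj : ∀ a, p a → ∀ b, p b → f a = f b → a = b) :
    (univ.filter p).card ≤ Fintype.card β := by
  classical
  have := Finset.card_le_card_of_injOn (s := univ.filter p) (t := (univ : Finset β)) f
    (fun a _ => mem_univ _) (by
    intro a ha b hb hab
    have ha' : p a := (Finset.mem_filter.mp (Finset.mem_coe.mp ha)).2
    have hb' : p b := (Finset.mem_filter.mp (Finset.mem_coe.mp hb)).2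
    exact hinj a ha' b hb' hab)
  simpa [Finset.card_univ] using this

lemma count3 (n : ℕ) :
    ((univ : Finset (Fin n × Fin n × Fin n)).filter
      (fun t => ¬(t.1 ≠ t.2.1 ∧ t.1 ≠ t.2.2 ∧ t.2.1 ≠ t.2.2))).card ≤ 3 * n ^ 2 := by
  classical
  have hsub : ((univ : Finset (Fin n × Fin n × Fin n)).filter
      (fun t => ¬(t.1 ≠ t.2.1 ∧ t.1 ≠ t.2.2 ∧ t.2.1 ≠ t.2.2)))
      ⊆ (univ.filter fun t : Fin n × Fin n × Fin n => t.1 = t.2.1)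
        ∪ (univ.filter fun t => t.1 = t.2.2)
        ∪ (univ.filter fun t => t.2.1 = t.2.2) := by
    intro t ht
    simp only [mem_filter, mem_univ, true_and, not_and_or, not_not, ne_eq] at ht
    simp only [mem_union, mem_filter, mem_univ, true_and]
    tauto
  have hcard : Fintype.card (Fin n × Fin n) = n ^ 2 := by simp [sq]
  have h1 : (univ.filter fun t : Fin n × Fin n × Fin n => t.1 = t.2.1).card ≤ n ^ 2 := by
    rw [← hcard]
    refine filter_card_le (fun t => (t.1, t.2.2)) _ ?_
    rintro ⟨a1, a2, a3⟩ ha ⟨b1, b2, b3⟩ hb hab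
    simp only [Prod.mk.injEq] at hab ha hb ⊢
    exact ⟨hab.1, by rw [← ha, ← hb, hab.1], hab.2⟩
  have h2 : (univ.filter fun t : Fin n × Fin n × Fin n => t.1 = t.2.2).card ≤ n ^ 2 := by
    rw [← hcard]
    refine filter_card_le (fun t => (t.1, t.2.1)) _ ?_
    rintro ⟨a1, a2, a3⟩ ha ⟨b1, b2, b3⟩ hb hab
    simp only [Prod.mk.injEq] at hab ha hb ⊢
    exact ⟨hab.1, hab.2, by rw [← ha, ← hb, hab.1]⟩
  have h3 : (univ.filter fun t : Fin n × Fin n × Fin n => t.2.1 = t.2.2).card ≤ n ^ 2 := by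
    rw [← hcard]
    refine filter_card_le (fun t => (t.1, t.2.1)) _ ?_
    rintro ⟨a1, a2, a3⟩ ha ⟨b1, b2, b3⟩ hb hab
    simp only [Prod.mk.injEq] at hab ha hb ⊢
    exact ⟨hab.1, hab.2, by rw [← ha, ← hb, hab.2]⟩
  calc _ ≤ _ := Finset.card_le_card hsub
  _ ≤ _ := by
    refine le_trans (Finset.card_union_le _ _) ?_
    refine le_trans (Nat.add_le_add (Finset.card_union_le _ _) le_rfl) ?_
    omega

lemma count4 (n : ℕ) :
    ((univ : Finset (Fin n × Fin n × Fin n × Fin n)).filter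
      (fun t => ¬(t.1 ≠ t.2.1 ∧ t.1 ≠ t.2.2.1 ∧ t.1 ≠ t.2.2.2 ∧ t.2.1 ≠ t.2.2.1
        ∧ t.2.1 ≠ t.2.2.2 ∧ t.2.2.1 ≠ t.2.2.2))).card ≤ 6 * n ^ 3 := by
  classical
  have hsub : ((univ : Finset (Fin n × Fin n × Fin n × Fin n)).filter
      (fun t => ¬(t.1 ≠ t.2.1 ∧ t.1 ≠ t.2.2.1 ∧ t.1 ≠ t.2.2.2 ∧ t.2.1 ≠ t.2.2.1
        ∧ t.2.1 ≠ t.2.2.2 ∧ t.2.2.1 ≠ t.2.2.2)))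
      ⊆ ((((((univ.filter fun t : Fin n × Fin n × Fin n × Fin n => t.1 = t.2.1)
        ∪ (univ.filter fun t => t.1 = t.2.2.1))
        ∪ (univ.filter fun t => t.1 = t.2.2.2))
        ∪ (univ.filter fun t => t.2.1 = t.2.2.1))
        ∪ (univ.filter fun t => t.2.1 = t.2.2.2))
        ∪ (univ.filter fun t => t.2.2.1 = t.2.2.2)) := by
    intro t ht
    simp only [mem_filter, mem_univ, true_and, not_and_or, not_not, ne_eq] at ht
    simp only [mem_union, mem_filter, mem_univ, true_and]
    tauto
  have hcard : Fintype.card (Fin n × Fin n × Fin n) = n ^ 3 := by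
    simp [pow_succ, sq]; ring
  have b1 : (univ.filter fun t : Fin n × Fin n × Fin n × Fin n => t.1 = t.2.1).card ≤ n ^ 3 := by
    rw [← hcard]
    refine filter_card_le (fun t => (t.1, t.2.2.1, t.2.2.2)) _ ?_
    rintro ⟨a1, a2, a3, a4⟩ ha ⟨b1, b2, b3, b4⟩ hb hab
    simp only [Prod.mk.injEq] at hab ha hb ⊢
    exact ⟨hab.1, by rw [← ha, ← hb, hab.1], hab.2.1, hab.2.2⟩
  have b2 : (univ.filter fun t : Fin n × Fin n × Fin n × Fin n => t.1 = t.2.2.1).card ≤ n ^ 3 := by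
    rw [← hcard]
    refine filter_card_le (fun t => (t.1, t.2.1, t.2.2.2)) _ ?_
    rintro ⟨a1, a2, a3, a4⟩ ha ⟨b1, b2, b3, b4⟩ hb hab
    simp only [Prod.mk.injEq] at hab ha hb ⊢
    exact ⟨hab.1, hab.2.1, by rw [← ha, ← hb, hab.1], hab.2.2⟩
  have b3 : (univ.filter fun t : Fin n × Fin n × Fin n × Fin n => t.1 = t.2.2.2).card ≤ n ^ 3 := by
    rw [← hcard]
    refine filter_card_le (fun t => (t.1, t.2.1, t.2.2.1)) _ ?_
    rintro ⟨a1, a2, a3, a4⟩ ha ⟨b1, b2, b3, b4⟩ hb hab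
    simp only [Prod.mk.injEq] at hab ha hb ⊢
    exact ⟨hab.1, hab.2.1, hab.2.2, by rw [← ha, ← hb, hab.1]⟩
  have b4 : (univ.filter fun t : Fin n × Fin n × Fin n × Fin n => t.2.1 = t.2.2.1).card ≤ n ^ 3 := by
    rw [← hcard]
    refine filter_card_le (fun t => (t.1, t.2.1, t.2.2.2)) _ ?_
    rintro ⟨a1, a2, a3, a4⟩ ha ⟨b1, b2, b3, b4⟩ hb hab
    simp only [Prod.mk.injEq] at hab ha hb ⊢
    exact ⟨hab.1, hab.2.1, by rw [← ha, ← hb, hab.2.1], hab.2.2⟩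
  have b5 : (univ.filter fun t : Fin n × Fin n × Fin n × Fin n => t.2.1 = t.2.2.2).card ≤ n ^ 3 := by
    rw [← hcard]
    refine filter_card_le (fun t => (t.1, t.2.1, t.2.2.1)) _ ?_
    rintro ⟨a1, a2, a3, a4⟩ ha ⟨b1, b2, b3, b4⟩ hb hab
    simp only [Prod.mk.injEq] at hab ha hb ⊢
    exact ⟨hab.1, hab.2.1, hab.2.2, by rw [← ha, ← hb, hab.2.1]⟩
  have b6 : (univ.filter fun t : Fin n × Fin n × Fin n × Fin n => t.2.2.1 = t.2.2.2).card
      ≤ n ^ 3 := by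
    rw [← hcard]
    refine filter_card_le (fun t => (t.1, t.2.1, t.2.2.1)) _ ?_
    rintro ⟨a1, a2, a3, a4⟩ ha ⟨b1, b2, b3, b4⟩ hb hab
    simp only [Prod.mk.injEq] at hab ha hb ⊢
    exact ⟨hab.1, hab.2.1, hab.2.2, by rw [← ha, ← hb, hab.2.2]⟩
  calc _ ≤ _ := Finset.card_le_card hsub
  _ ≤ _ := by
    refine le_trans (Finset.card_union_le _ _) ?_
    refine le_trans (Nat.add_le_add (Finset.card_union_le _ _) le_rfl) ?_
    refine le_trans (Nat.add_le_add (Nat.add_le_add (Finset.card_union_le _ _) le_rfl) le_rfl) ?_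
    refine le_trans (Nat.add_le_add (Nat.add_le_add (Nat.add_le_add
      (Finset.card_union_le _ _) le_rfl) le_rfl) le_rfl) ?_
    refine le_trans (Nat.add_le_add (Nat.add_le_add (Nat.add_le_add (Nat.add_le_add
      (Finset.card_union_le _ _) le_rfl) le_rfl) le_rfl) le_rfl) ?_
    omega

lemma triple_sum_bound {n : ℕ} (hn : 1 ≤ n) (I : Fin n → Fin n → Fin n → Fin n → ℝ)
    (C3 c : ℝ) (hval : ∀ i j l, i ≠ j → i ≠ l → j ≠ l → I i j i l = C3)
    (hbd : ∀ i j a b, |I i j a b| ≤ c) (hC : |C3| ≤ c) :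
    |(1 / (n : ℝ) ^ 3) * (∑ i, ∑ j, ∑ l, I i j i l) - C3| ≤ 6 * c / (n : ℝ) := by
  classical
  have hn' : (0 : ℝ) < (n : ℝ) := by exact_mod_cast hn
  have hc : 0 ≤ c := le_trans (abs_nonneg _) hC
  set D : Fin n × Fin n × Fin n → ℝ := fun t => I t.1 t.2.1 t.1 t.2.2 - C3 with hD
  have h1 : ∑ i, ∑ j, ∑ l, I i j i l
      = ∑ t : Fin n × Fin n × Fin n, I t.1 t.2.1 t.1 t.2.2 := by
    rw [Fintype.sum_prod_type]
    exact Finset.sum_congr rfl fun i _ => by rw [Fintype.sum_prod_type]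
  have h2 : (1 / (n : ℝ) ^ 3) * (∑ i, ∑ j, ∑ l, I i j i l) - C3
      = (1 / (n : ℝ) ^ 3) * ∑ t, D t := by
    rw [h1, hD]
    rw [Finset.sum_sub_distrib, Finset.sum_const, Finset.card_univ]
    simp only [Fintype.card_prod, Fintype.card_fin, nsmul_eq_mul]
    push_cast
    rw [mul_sub]
    congr 1
    rw [show ((n:ℝ) * ((n:ℝ) * (n:ℝ))) * C3 = (n:ℝ)^3 * C3 by ring, ← mul_assoc,
      one_div, inv_mul_cancel₀ (by positivity : ((n:ℝ)^3) ≠ 0), one_mul]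
  have h3 : |∑ t, D t| ≤ (3 * (n : ℝ) ^ 2) * (2 * c) := by
    rw [← Finset.sum_filter_add_sum_filter_not univ
      (fun t : Fin n × Fin n × Fin n => t.1 ≠ t.2.1 ∧ t.1 ≠ t.2.2 ∧ t.2.1 ≠ t.2.2)]
    have hz : ∑ t ∈ univ.filter (fun t : Fin n × Fin n × Fin n =>
        t.1 ≠ t.2.1 ∧ t.1 ≠ t.2.2 ∧ t.2.1 ≠ t.2.2), D t = 0 := by
      refine Finset.sum_eq_zero fun t ht => ?_
      obtain ⟨ht1, ht2, ht3⟩ := (Finset.mem_filter.mp ht).2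
      simp [hD, hval t.1 t.2.1 t.2.2 ht1 ht2 ht3]
    rw [hz, zero_add]
    calc |∑ t ∈ univ.filter _, D t| ≤ ∑ t ∈ univ.filter (fun t : Fin n × Fin n × Fin n =>
          ¬(t.1 ≠ t.2.1 ∧ t.1 ≠ t.2.2 ∧ t.2.1 ≠ t.2.2)), |D t| :=
        Finset.abs_sum_le_sum_abs _ _
      _ ≤ (univ.filter (fun t : Fin n × Fin n × Fin n =>
          ¬(t.1 ≠ t.2.1 ∧ t.1 ≠ t.2.2 ∧ t.2.1 ≠ t.2.2))).card • (2 * c) := by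
        refine Finset.sum_le_card_nsmul _ _ _ fun t _ => ?_
        calc |D t| ≤ |I t.1 t.2.1 t.1 t.2.2| + |C3| := abs_sub _ _
          _ ≤ c + c := add_le_add (hbd _ _ _ _) hC
          _ = 2 * c := by ring
      _ ≤ (3 * (n : ℝ) ^ 2) * (2 * c) := by
        rw [nsmul_eq_mul]
        refine mul_le_mul_of_nonneg_right ?_ (by positivity)
        exact_mod_cast count3 n
  rw [h2, abs_mul, abs_of_nonneg (by positivity : (0:ℝ) ≤ 1 / (n : ℝ) ^ 3)]
  calc (1 / (n : ℝ) ^ 3) * |∑ t, D t| ≤ (1 / (n : ℝ) ^ 3) * ((3 * (n : ℝ) ^ 2) * (2 * c)) :=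
      mul_le_mul_of_nonneg_left h3 (by positivity)
    _ = 6 * c / (n : ℝ) := by field_simp; ring

lemma quad_sum_bound {n : ℕ} (hn : 1 ≤ n) (I : Fin n → Fin n → Fin n → Fin n → ℝ)
    (K c : ℝ) (hval : ∀ i j a b, i ≠ j → i ≠ a → i ≠ b → j ≠ a → j ≠ b → a ≠ b →
      I i j a b = K)
    (hbd : ∀ i j a b, |I i j a b| ≤ c) (hK : |K| ≤ c) :
    |(1 / (n : ℝ) ^ 4) * (∑ i, ∑ a, ∑ j, ∑ b, I i j a b) - K| ≤ 12 * c / (n : ℝ) := by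
  classical
  have hn' : (0 : ℝ) < (n : ℝ) := by exact_mod_cast hn
  have hc : 0 ≤ c := le_trans (abs_nonneg _) hK
  set D : Fin n × Fin n × Fin n × Fin n → ℝ :=
    fun t => I t.1 t.2.2.1 t.2.1 t.2.2.2 - K with hD
  have h1 : ∑ i, ∑ a, ∑ j, ∑ b, I i j a b
      = ∑ t : Fin n × Fin n × Fin n × Fin n, I t.1 t.2.2.1 t.2.1 t.2.2.2 := by
    rw [Fintype.sum_prod_type]
    refine Finset.sum_congr rfl fun i _ => ?_
    rw [Fintype.sum_prod_type]
    refine Finset.sum_congr rfl fun a _ => ?_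
    rw [Fintype.sum_prod_type]
  have h2 : (1 / (n : ℝ) ^ 4) * (∑ i, ∑ a, ∑ j, ∑ b, I i j a b) - K
      = (1 / (n : ℝ) ^ 4) * ∑ t, D t := by
    rw [h1, hD]
    rw [Finset.sum_sub_distrib, Finset.sum_const, Finset.card_univ]
    simp only [Fintype.card_prod, Fintype.card_fin, nsmul_eq_mul]
    push_cast
    rw [mul_sub]
    congr 1
    rw [show ((n:ℝ) * ((n:ℝ) * ((n:ℝ) * (n:ℝ)))) * K = (n:ℝ)^4 * K by ring, ← mul_assoc,
      one_div, inv_mul_cancel₀ (by positivity : ((n:ℝ)^4) ≠ 0), one_mul]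
  have h3 : |∑ t, D t| ≤ (6 * (n : ℝ) ^ 3) * (2 * c) := by
    rw [← Finset.sum_filter_add_sum_filter_not univ
      (fun t : Fin n × Fin n × Fin n × Fin n => t.1 ≠ t.2.1 ∧ t.1 ≠ t.2.2.1 ∧ t.1 ≠ t.2.2.2
        ∧ t.2.1 ≠ t.2.2.1 ∧ t.2.1 ≠ t.2.2.2 ∧ t.2.2.1 ≠ t.2.2.2)]
    have hz : ∑ t ∈ univ.filter (fun t : Fin n × Fin n × Fin n × Fin n =>
        t.1 ≠ t.2.1 ∧ t.1 ≠ t.2.2.1 ∧ t.1 ≠ t.2.2.2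
        ∧ t.2.1 ≠ t.2.2.1 ∧ t.2.1 ≠ t.2.2.2 ∧ t.2.2.1 ≠ t.2.2.2), D t = 0 := by
      refine Finset.sum_eq_zero fun t ht => ?_
      obtain ⟨h1', h2', h3', h4', h5', h6'⟩ := (Finset.mem_filter.mp ht).2
      -- I (t.1) (t.2.2.1) (t.2.1) (t.2.2.2): i=t.1, j=t.2.2.1, a=t.2.1, b=t.2.2.2
      simp [hD, hval t.1 t.2.2.1 t.2.1 t.2.2.2 h2' h1' h3' (Ne.symm h4') h6' h5']
    rw [hz, zero_add]
    calc |∑ t ∈ univ.filter _, D t| ≤ ∑ t ∈ univ.filter (fun t : Fin n × Fin n × Fin n × Fin n =>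
          ¬(t.1 ≠ t.2.1 ∧ t.1 ≠ t.2.2.1 ∧ t.1 ≠ t.2.2.2
          ∧ t.2.1 ≠ t.2.2.1 ∧ t.2.1 ≠ t.2.2.2 ∧ t.2.2.1 ≠ t.2.2.2)), |D t| :=
        Finset.abs_sum_le_sum_abs _ _
      _ ≤ (univ.filter (fun t : Fin n × Fin n × Fin n × Fin n =>
          ¬(t.1 ≠ t.2.1 ∧ t.1 ≠ t.2.2.1 ∧ t.1 ≠ t.2.2.2
          ∧ t.2.1 ≠ t.2.2.1 ∧ t.2.1 ≠ t.2.2.2 ∧ t.2.2.1 ≠ t.2.2.2))).card • (2 * c) := by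
        refine Finset.sum_le_card_nsmul _ _ _ fun t _ => ?_
        calc |D t| ≤ |I t.1 t.2.2.1 t.2.1 t.2.2.2| + |K| := abs_sub _ _
          _ ≤ c + c := add_le_add (hbd _ _ _ _) hK
          _ = 2 * c := by ring
      _ ≤ (6 * (n : ℝ) ^ 3) * (2 * c) := by
        rw [nsmul_eq_mul]
        refine mul_le_mul_of_nonneg_right ?_ (by positivity)
        exact_mod_cast count4 n
  rw [h2, abs_mul, abs_of_nonneg (by positivity : (0:ℝ) ≤ 1 / (n : ℝ) ^ 4)]
  calc (1 / (n : ℝ) ^ 4) * |∑ t, D t| ≤ (1 / (n : ℝ) ^ 4) * ((6 * (n : ℝ) ^ 3) * (2 * c)) :=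
      mul_le_mul_of_nonneg_left h3 (by positivity)
    _ = 12 * c / (n : ℝ) := by field_simp; ring

lemma expand_integral (μ : Measure E) [IsProbabilityMeasure μ] (h : E → E → ℝ)
    (hm : Measurable fun p : E × E => h p.1 p.2) (c : ℝ) (hb : ∀ u v, |h u v| ≤ c) (n : ℕ) :
    ∫ z, (4 * ((1 / (n : ℝ) ^ 3) * ∑ i : Fin n, (∑ j : Fin n, h (z i) (z j)) ^ 2
        - (1 / (n : ℝ) ^ 4) * (∑ i : Fin n, ∑ j : Fin n, h (z i) (z j)) ^ 2))
      ∂(Measure.pi fun _ : Fin n => μ)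
    = 4 * ((1 / (n : ℝ) ^ 3) * ∑ i, ∑ j, ∑ l,
          (∫ z, h (z i) (z j) * h (z i) (z l) ∂(Measure.pi fun _ : Fin n => μ))
      - (1 / (n : ℝ) ^ 4) * ∑ i, ∑ a, ∑ j, ∑ b,
          (∫ z, h (z i) (z j) * h (z a) (z b) ∂(Measure.pi fun _ : Fin n => μ))) := by
  set π := Measure.pi fun _ : Fin n => μ with hπ
  have hint : ∀ i j a b : Fin n, Integrable (fun z => h (z i) (z j) * h (z a) (z b)) π :=
    fun i j a b => integrable_of_bound π _ (meas_prod h hm i j a b).aestronglyMeasurable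
      (c * c) (fun z => bound_prod h c hb _ _ _ _)
  have int1l : ∀ i j a : Fin n, Integrable (fun z => ∑ b, h (z i) (z j) * h (z a) (z b)) π :=
    fun i j a => integrable_finset_sum _ (fun b _ => hint i j a b)
  have int2l : ∀ i a : Fin n, Integrable (fun z => ∑ j, ∑ b, h (z i) (z j) * h (z a) (z b)) π :=
    fun i a => integrable_finset_sum _ (fun j _ => int1l i j a)
  have int3l : ∀ i : Fin n, Integrable (fun z => ∑ a, ∑ j, ∑ b, h (z i) (z j) * h (z a) (z b)) π :=
    fun i => integrable_finset_sum _ (fun a _ => int2l i a)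
  have intT2 : Integrable (fun z => ∑ i, ∑ a, ∑ j, ∑ b, h (z i) (z j) * h (z a) (z b)) π :=
    integrable_finset_sum _ (fun i _ => int3l i)
  have intl : ∀ i j : Fin n, Integrable (fun z => ∑ l, h (z i) (z j) * h (z i) (z l)) π :=
    fun i j => integrable_finset_sum _ (fun l _ => hint i j i l)
  have intjl : ∀ i : Fin n, Integrable (fun z => ∑ j, ∑ l, h (z i) (z j) * h (z i) (z l)) π :=
    fun i => integrable_finset_sum _ (fun j _ => intl i j)
  have intT1 : Integrable (fun z => ∑ i, ∑ j, ∑ l, h (z i) (z j) * h (z i) (z l)) π :=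
    integrable_finset_sum _ (fun i _ => intjl i)
  have hpt : ∀ z : Fin n → E,
      4 * ((1 / (n : ℝ) ^ 3) * ∑ i : Fin n, (∑ j : Fin n, h (z i) (z j)) ^ 2
        - (1 / (n : ℝ) ^ 4) * (∑ i : Fin n, ∑ j : Fin n, h (z i) (z j)) ^ 2)
      = (4 * (1 / (n : ℝ) ^ 3)) * (∑ i, ∑ j, ∑ l, h (z i) (z j) * h (z i) (z l))
        - (4 * (1 / (n : ℝ) ^ 4)) * (∑ i, ∑ a, ∑ j, ∑ b, h (z i) (z j) * h (z a) (z b)) := by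
    intro z
    have e1 : ∑ i : Fin n, (∑ j : Fin n, h (z i) (z j)) ^ 2
        = ∑ i : Fin n, ∑ j, ∑ l, h (z i) (z j) * h (z i) (z l) :=
      Finset.sum_congr rfl fun i _ => by rw [pow_two, Finset.sum_mul_sum]
    have e2 : (∑ i : Fin n, ∑ j : Fin n, h (z i) (z j)) ^ 2
        = ∑ i : Fin n, ∑ a, ∑ j, ∑ b, h (z i) (z j) * h (z a) (z b) := by
      rw [pow_two, Finset.sum_mul_sum]
      exact Finset.sum_congr rfl fun i _ => Finset.sum_congr rfl fun a _ => by
        rw [Finset.sum_mul_sum]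
    rw [e1, e2]; ring
  rw [integral_congr_ae (Filter.Eventually.of_forall hpt)]
  rw [integral_sub (intT1.const_mul _) (intT2.const_mul _), integral_const_mul,
    integral_const_mul]
  have E1 : ∫ z, (∑ i, ∑ j, ∑ l, h (z i) (z j) * h (z i) (z l)) ∂π
      = ∑ i, ∑ j, ∑ l, ∫ z, h (z i) (z j) * h (z i) (z l) ∂π := by
    rw [integral_finset_sum _ (fun i _ => intjl i)]
    refine Finset.sum_congr rfl fun i _ => ?_
    rw [integral_finset_sum _ (fun j _ => intl i j)]
    refine Finset.sum_congr rfl fun j _ => ?_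
    rw [integral_finset_sum _ (fun l _ => hint i j i l)]
  have E2 : ∫ z, (∑ i, ∑ a, ∑ j, ∑ b, h (z i) (z j) * h (z a) (z b)) ∂π
      = ∑ i, ∑ a, ∑ j, ∑ b, ∫ z, h (z i) (z j) * h (z a) (z b) ∂π := by
    rw [integral_finset_sum _ (fun i _ => int3l i)]
    refine Finset.sum_congr rfl fun i _ => ?_
    rw [integral_finset_sum _ (fun a _ => int2l i a)]
    refine Finset.sum_congr rfl fun a _ => ?_
    rw [integral_finset_sum _ (fun j _ => int1l i j a)]
    refine Finset.sum_congr rfl fun j _ => ?_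
    rw [integral_finset_sum _ (fun b _ => hint i j a b)]
  rw [E1, E2]; ring

end AuxMMD

/-- Bias bound for the V-statistic variance estimator:
`|E[σ̂²] - σ²| ≤ 1152 ν² / n` for a fixed bounded symmetric kernel. -/
theorem sigmaHatSq_bias {𝓧 : Type*} [MeasurableSpace 𝓧]
    (k : 𝓧 → 𝓧 → ℝ) (hsymm : ∀ x y, k x y = k y x)
    (hmeas : Measurable fun p : 𝓧 × 𝓧 => k p.1 p.2)
    (ν : ℝ) (hbdd : ∀ x y, |k x y| ≤ ν)
    (P Q : Measure 𝓧) [IsProbabilityMeasure P] [IsProbabilityMeasure Q]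
    (n : ℕ) (hn : 1 ≤ n) :
    |(∫ sp, sigmaHatSq k sp ∂(sampleMeasure P Q n)) - sigmaSqPop k P Q| ≤
      1152 * ν ^ 2 / (n : ℝ) := by
  classical
  haveI : Nonempty 𝓧 := by
    by_contra hemp
    rw [not_nonempty_iff] at hemp
    have h0 : P (Set.univ : Set 𝓧) = 1 := measure_univ
    rw [Set.univ_eq_empty_iff.mpr hemp, measure_empty] at h0
    exact zero_ne_one h0
  have hν : 0 ≤ ν :=
    le_trans (abs_nonneg _) (hbdd (Classical.arbitrary 𝓧) (Classical.arbitrary 𝓧))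
  set μ : Measure (𝓧 × 𝓧) := P.prod Q with hμ
  set h : 𝓧 × 𝓧 → 𝓧 × 𝓧 → ℝ := hPair k with hh
  set c : ℝ := 4 * ν with hc
  have hm' : Measurable fun p : (𝓧 × 𝓧) × (𝓧 × 𝓧) => h p.1 p.2 := by
    have m1 : Measurable fun p : (𝓧 × 𝓧) × (𝓧 × 𝓧) => k p.1.1 p.2.1 := by
      have : (fun p : (𝓧 × 𝓧) × (𝓧 × 𝓧) => k p.1.1 p.2.1)
          = (fun q : 𝓧 × 𝓧 => k q.1 q.2) ∘ (fun p => (p.1.1, p.2.1)) := rfl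
      rw [this]; exact hmeas.comp ((measurable_fst.fst).prodMk (measurable_snd.fst))
    have m2 : Measurable fun p : (𝓧 × 𝓧) × (𝓧 × 𝓧) => k p.1.2 p.2.2 := by
      have : (fun p : (𝓧 × 𝓧) × (𝓧 × 𝓧) => k p.1.2 p.2.2)
          = (fun q : 𝓧 × 𝓧 => k q.1 q.2) ∘ (fun p => (p.1.2, p.2.2)) := rfl
      rw [this]; exact hmeas.comp ((measurable_fst.snd).prodMk (measurable_snd.snd))
    have m3 : Measurable fun p : (𝓧 × 𝓧) × (𝓧 × 𝓧) => k p.1.1 p.2.2 := by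
      have : (fun p : (𝓧 × 𝓧) × (𝓧 × 𝓧) => k p.1.1 p.2.2)
          = (fun q : 𝓧 × 𝓧 => k q.1 q.2) ∘ (fun p => (p.1.1, p.2.2)) := rfl
      rw [this]; exact hmeas.comp ((measurable_fst.fst).prodMk (measurable_snd.snd))
    have m4 : Measurable fun p : (𝓧 × 𝓧) × (𝓧 × 𝓧) => k p.2.1 p.1.2 := by
      have : (fun p : (𝓧 × 𝓧) × (𝓧 × 𝓧) => k p.2.1 p.1.2)
          = (fun q : 𝓧 × 𝓧 => k q.1 q.2) ∘ (fun p => (p.2.1, p.1.2)) := rfl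
      rw [this]; exact hmeas.comp ((measurable_snd.fst).prodMk (measurable_fst.snd))
    exact ((m1.add m2).sub m3).sub m4
  have hb' : ∀ u v : 𝓧 × 𝓧, |h u v| ≤ c := by
    intro u v
    have h1 := abs_le.mp (hbdd u.1 v.1)
    have h2 := abs_le.mp (hbdd u.2 v.2)
    have h3 := abs_le.mp (hbdd u.1 v.2)
    have h4 := abs_le.mp (hbdd v.1 u.2)
    refine abs_le.mpr ⟨?_, ?_⟩ <;> simp only [hh, hc, hPair] <;>
      [linarith [h1.1, h2.1, h3.2, h4.2]; linarith [h1.2, h2.2, h3.1, h4.1]]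
  have hred : ∫ sp, sigmaHatSq k sp ∂(sampleMeasure P Q n)
      = ∫ z, (4 * ((1 / (n : ℝ) ^ 3) * ∑ i : Fin n, (∑ j : Fin n, h (z i) (z j)) ^ 2
          - (1 / (n : ℝ) ^ 4) * (∑ i : Fin n, ∑ j : Fin n, h (z i) (z j)) ^ 2))
        ∂(Measure.pi fun _ : Fin n => μ) := by
    have mp := measurePreserving_arrowProdEquivProdArrow 𝓧 𝓧 (Fin n)
      (fun _ => P) (fun _ => Q)
    rw [show sampleMeasure P Q n
      = (Measure.pi fun _ : Fin n => P).prod (Measure.pi fun _ : Fin n => Q) from rfl]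
    rw [← mp.integral_comp' (sigmaHatSq k)]
    rfl
  rw [hred, expand_integral μ h hm' c hb' n]
  have B1 := triple_sum_bound hn
    (fun i j a b => ∫ z, h (z i) (z j) * h (z a) (z b) ∂(Measure.pi fun _ : Fin n => μ))
    (hCross k P Q) (c * c)
    (fun i j l h1 h2 h3 => by
      beta_reduce
      rw [I_triple_eq μ h hm' c hb' i j l h1 h2 h3]; rfl)
    (fun i j a b => I_bound μ h c hb' i j a b)
    (by
      rw [show hCross k P Q
        = ∫ u, ∫ v, ∫ w, h u v * h u w ∂μ ∂μ ∂μ from rfl,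
        ← triple_integral μ h hm' c hb']
      exact I_bound μ h c hb' 0 1 0 2)
  have B2 := quad_sum_bound hn
    (fun i j a b => ∫ z, h (z i) (z j) * h (z a) (z b) ∂(Measure.pi fun _ : Fin n => μ))
    ((etaPop k P Q) ^ 2) (c * c)
    (fun i j a b h1 h2 h3 h4 h5 h6 => by
      beta_reduce
      rw [I_quad_eq μ h hm' c hb' i j a b h1 h2 h3 h4 h5 h6]; rfl)
    (fun i j a b => I_bound μ h c hb' i j a b)
    (by
      have he : |etaPop k P Q| ≤ c := by
        rw [show etaPop k P Q = ∫ u, ∫ v, h u v ∂μ ∂μ from rfl]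
        exact eta_bound μ h c hb'
      rw [pow_two, abs_mul]
      exact mul_le_mul he he (abs_nonneg _) (le_trans (abs_nonneg _) he))
  set S1 := ∑ i : Fin n, ∑ j : Fin n, ∑ l : Fin n,
    ∫ z, h (z i) (z j) * h (z i) (z l) ∂(Measure.pi fun _ : Fin n => μ) with hS1
  set S2 := ∑ i : Fin n, ∑ a : Fin n, ∑ j : Fin n, ∑ b : Fin n,
    ∫ z, h (z i) (z j) * h (z a) (z b) ∂(Measure.pi fun _ : Fin n => μ) with hS2
  have hkey : 4 * ((1 / (n : ℝ) ^ 3) * S1 - (1 / (n : ℝ) ^ 4) * S2) - sigmaSqPop k P Q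
      = 4 * (((1 / (n : ℝ) ^ 3) * S1 - hCross k P Q)
        - ((1 / (n : ℝ) ^ 4) * S2 - (etaPop k P Q) ^ 2)) := by
    rw [sigmaSqPop]; ring
  rw [hkey]
  have habs : |4 * (((1 / (n : ℝ) ^ 3) * S1 - hCross k P Q)
        - ((1 / (n : ℝ) ^ 4) * S2 - (etaPop k P Q) ^ 2))|
      ≤ 4 * (|(1 / (n : ℝ) ^ 3) * S1 - hCross k P Q|
        + |(1 / (n : ℝ) ^ 4) * S2 - (etaPop k P Q) ^ 2|) := by
    rw [abs_mul, abs_of_nonneg (by norm_num : (0:ℝ) ≤ 4)]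
    exact mul_le_mul_of_nonneg_left (abs_sub _ _) (by norm_num)
  refine le_trans habs ?_
  have hfin : 4 * (6 * (c * c) / (n : ℝ) + 12 * (c * c) / (n : ℝ))
      = 1152 * ν ^ 2 / (n : ℝ) := by
    rw [hc]; ring
  calc 4 * (|(1 / (n : ℝ) ^ 3) * S1 - hCross k P Q|
        + |(1 / (n : ℝ) ^ 4) * S2 - (etaPop k P Q) ^ 2|)
      ≤ 4 * (6 * (c * c) / (n : ℝ) + 12 * (c * c) / (n : ℝ)) := by
        refine mul_le_mul_of_nonneg_left (add_le_add B1 B2) (by norm_num)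
    _ = 1152 * ν ^ 2 / (n : ℝ) := hfin
end
end

section
/- Under the uniform boundedness and parameter-Lipschitz assumptions, for any fixed points X_1,…,X_n, Y_1,…,Y_n and any ω, ω' ∈ Ω: | σ̂_ω² − σ̂_{ω'}² | ≤ 256·L_k·ν·‖ω − ω'‖. Moreover, the population quantities satisfy | σ_ω² − σ_{ω'}² | ≤ 256·L_k·ν·‖ω − ω'‖. -/
open MeasureTheory Finset

noncomputable section

/-! ### Auxiliary lemmas -/

private lemma abs_mul_sub_mul {a b C d : ℝ} (ha : |a| ≤ C) (hb : |b| ≤ C)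
    (hd : |a - b| ≤ d) : |a * a - b * b| ≤ 2 * C * d := by
  have hC : 0 ≤ C := le_trans (abs_nonneg a) ha
  have h : a * a - b * b = (a + b) * (a - b) := by ring
  rw [h, abs_mul]
  have h1 : |a + b| ≤ 2 * C := by
    have := abs_add_le a b; linarith
  exact mul_le_mul h1 hd (abs_nonneg _) (by linarith)

private lemma abs_sq_sub_sq {a b C d : ℝ} (ha : |a| ≤ C) (hb : |b| ≤ C)
    (hd : |a - b| ≤ d) : |a ^ 2 - b ^ 2| ≤ 2 * C * d := by
  have h : a ^ 2 - b ^ 2 = a * a - b * b := by ring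
  rw [h]; exact abs_mul_sub_mul ha hb hd

private lemma abs_fin_sum_le {n : ℕ} (f : Fin n → ℝ) {C : ℝ} (h : ∀ i, |f i| ≤ C) :
    |∑ i, f i| ≤ (n : ℝ) * C := by
  calc |∑ i, f i| ≤ ∑ i, |f i| := Finset.abs_sum_le_sum_abs _ _
    _ ≤ ∑ _i : Fin n, C := Finset.sum_le_sum fun i _ => h i
    _ = (n : ℝ) * C := by
        rw [Finset.sum_const, Finset.card_univ, Fintype.card_fin, nsmul_eq_mul]

private lemma abs_integral_le_of_abs_le {α : Type*} [MeasurableSpace α] {μ : Measure α}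
    [IsProbabilityMeasure μ] {f : α → ℝ} {C : ℝ} (hf : ∀ x, |f x| ≤ C) :
    |∫ x, f x ∂μ| ≤ C := by
  have h := norm_integral_le_of_norm_le_const (μ := μ) (f := f) (C := C)
    (Filter.Eventually.of_forall (by simpa [Real.norm_eq_abs] using hf))
  simpa [Real.norm_eq_abs] using h

private lemma integrable_of_abs_le {α : Type*} [MeasurableSpace α] {μ : Measure α}
    [IsFiniteMeasure μ] {f : α → ℝ} {C : ℝ} (hm : AEStronglyMeasurable f μ)
    (hf : ∀ x, |f x| ≤ C) : Integrable f μ :=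
  (integrable_const C).mono' hm
    (Filter.Eventually.of_forall (by simpa [Real.norm_eq_abs] using hf))

private lemma abs_integral_sub_le {α : Type*} [MeasurableSpace α] {μ : Measure α}
    [IsProbabilityMeasure μ] {f g : α → ℝ} {D : ℝ} (hf : Integrable f μ) (hg : Integrable g μ)
    (hd : ∀ x, |f x - g x| ≤ D) : |(∫ x, f x ∂μ) - ∫ x, g x ∂μ| ≤ D := by
  rw [← integral_sub hf hg]
  exact abs_integral_le_of_abs_le hd

/-- Lipschitzness of the variance estimator and of the asymptotic variance in the
kernel parameter: `|σ̂_ω² - σ̂_{ω'}²| ≤ 256 L_k ν ‖ω - ω'‖` and likewise for the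
population quantity. -/
theorem sigmaSq_lipschitz {𝓧 : Type*} [MeasurableSpace 𝓧]
    {E : Type*} [NormedAddCommGroup E] [NormedSpace ℝ E]
    (Ω : Set E) (k : E → 𝓧 → 𝓧 → ℝ)
    (hsymm : ∀ ω ∈ Ω, ∀ x y, k ω x y = k ω y x)
    (ν : ℝ) (hbdd : ∀ ω ∈ Ω, ∀ x y, |k ω x y| ≤ ν)
    (Lk : ℝ) (hLip : ∀ ω ∈ Ω, ∀ ω' ∈ Ω, ∀ x y, |k ω x y - k ω' x y| ≤ Lk * ‖ω - ω'‖)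
    (hmeas : ∀ ω ∈ Ω, Measurable fun p : 𝓧 × 𝓧 => k ω p.1 p.2)
    (P Q : Measure 𝓧) [IsProbabilityMeasure P] [IsProbabilityMeasure Q]
    (ω : E) (hω : ω ∈ Ω) (ω' : E) (hω' : ω' ∈ Ω) :
    (∀ (n : ℕ) (sp : (Fin n → 𝓧) × (Fin n → 𝓧)),
        |sigmaHatSq (k ω) sp - sigmaHatSq (k ω') sp| ≤ 256 * Lk * ν * ‖ω - ω'‖) ∧
    |sigmaSqPop (k ω) P Q - sigmaSqPop (k ω') P Q| ≤ 256 * Lk * ν * ‖ω - ω'‖ := by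
  -- 𝓧 is nonempty since it carries a probability measure
  have hne : Nonempty 𝓧 := by
    by_contra h
    rw [not_nonempty_iff] at h
    have h1 : P Set.univ = 1 := measure_univ
    rw [Set.univ_eq_empty_iff.mpr h] at h1
    simp at h1
  obtain ⟨x₀⟩ := hne
  set D : ℝ := Lk * ‖ω - ω'‖ with hD_def
  have hν : 0 ≤ ν := le_trans (abs_nonneg _) (hbdd ω hω x₀ x₀)
  have hD : 0 ≤ D := le_trans (abs_nonneg _) (hLip ω hω ω' hω' x₀ x₀)
  have hRHS : 256 * Lk * ν * ‖ω - ω'‖ = 4 * (2 * (4 * ν) * (4 * D) + 2 * (4 * ν) * (4 * D)) := by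
    rw [hD_def]; ring
  constructor
  · -- empirical part
    intro n sp
    rcases Nat.eq_zero_or_pos n with hn | hn
    · subst hn
      simp only [sigmaHatSq]
      rw [hRHS]
      simp only [Finset.univ_eq_empty, Finset.sum_empty]
      norm_num
      positivity
    · have hnR : (0:ℝ) < n := by exact_mod_cast hn
      -- pointwise bounds on Hmat
      have Hb : ∀ (ω₀ : E), ω₀ ∈ Ω → ∀ i j, |Hmat (k ω₀) sp i j| ≤ 4 * ν := by
        intro ω₀ h₀ i j
        obtain ⟨a1, b1⟩ := abs_le.mp (hbdd ω₀ h₀ (sp.1 i) (sp.1 j))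
        obtain ⟨a2, b2⟩ := abs_le.mp (hbdd ω₀ h₀ (sp.2 i) (sp.2 j))
        obtain ⟨a3, b3⟩ := abs_le.mp (hbdd ω₀ h₀ (sp.1 i) (sp.2 j))
        obtain ⟨a4, b4⟩ := abs_le.mp (hbdd ω₀ h₀ (sp.1 j) (sp.2 i))
        rw [Hmat, abs_le]
        constructor <;> [linarith; linarith]
      have Hd : ∀ i j, |Hmat (k ω) sp i j - Hmat (k ω') sp i j| ≤ 4 * D := by
        intro i j
        obtain ⟨a1, b1⟩ := abs_le.mp (hLip ω hω ω' hω' (sp.1 i) (sp.1 j))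
        obtain ⟨a2, b2⟩ := abs_le.mp (hLip ω hω ω' hω' (sp.2 i) (sp.2 j))
        obtain ⟨a3, b3⟩ := abs_le.mp (hLip ω hω ω' hω' (sp.1 i) (sp.2 j))
        obtain ⟨a4, b4⟩ := abs_le.mp (hLip ω hω ω' hω' (sp.1 j) (sp.2 i))
        rw [Hmat, Hmat, abs_le]
        constructor <;> [linarith; linarith]
      set a : Fin n → ℝ := fun i => ∑ j, Hmat (k ω) sp i j with ha_def
      set a' : Fin n → ℝ := fun i => ∑ j, Hmat (k ω') sp i j with ha'_def
      have hab : ∀ i, |a i| ≤ (n : ℝ) * (4 * ν) := fun i => abs_fin_sum_le _ (Hb ω hω i)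
      have hab' : ∀ i, |a' i| ≤ (n : ℝ) * (4 * ν) := fun i => abs_fin_sum_le _ (Hb ω' hω' i)
      have had : ∀ i, |a i - a' i| ≤ (n : ℝ) * (4 * D) := by
        intro i
        have : a i - a' i = ∑ j, (Hmat (k ω) sp i j - Hmat (k ω') sp i j) := by
          rw [ha_def, ha'_def, Finset.sum_sub_distrib]
        rw [this]
        exact abs_fin_sum_le _ (Hd i)
      -- bounds on sums of squares
      have hS : |∑ i, (a i) ^ 2 - ∑ i, (a' i) ^ 2| ≤
          (n : ℝ) * (2 * ((n : ℝ) * (4 * ν)) * ((n : ℝ) * (4 * D))) := by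
        rw [← Finset.sum_sub_distrib]
        exact abs_fin_sum_le _ fun i => abs_sq_sub_sq (hab i) (hab' i) (had i)
      have hT : |(∑ i, a i) ^ 2 - (∑ i, a' i) ^ 2| ≤
          2 * ((n : ℝ) * ((n : ℝ) * (4 * ν))) * ((n : ℝ) * ((n : ℝ) * (4 * D))) := by
        refine abs_sq_sub_sq (abs_fin_sum_le _ hab) (abs_fin_sum_le _ hab') ?_
        rw [← Finset.sum_sub_distrib]
        exact abs_fin_sum_le _ had
      have hdiff : sigmaHatSq (k ω) sp - sigmaHatSq (k ω') sp =
          4 * ((1 / (n : ℝ) ^ 3) * (∑ i, (a i) ^ 2 - ∑ i, (a' i) ^ 2)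
             - (1 / (n : ℝ) ^ 4) * ((∑ i, a i) ^ 2 - (∑ i, a' i) ^ 2)) := by
        rw [sigmaHatSq, sigmaHatSq]; ring
      rw [hdiff, hRHS]
      have h3 : (0:ℝ) < (n : ℝ) ^ 3 := by positivity
      have h4 : (0:ℝ) < (n : ℝ) ^ 4 := by positivity
      have e1 : |(1 / (n : ℝ) ^ 3) * (∑ i, (a i) ^ 2 - ∑ i, (a' i) ^ 2)| ≤
          2 * (4 * ν) * (4 * D) := by
        rw [abs_mul, abs_of_pos (by positivity : (0:ℝ) < 1 / (n : ℝ) ^ 3)]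
        calc (1 / (n : ℝ) ^ 3) * |∑ i, (a i) ^ 2 - ∑ i, (a' i) ^ 2|
            ≤ (1 / (n : ℝ) ^ 3) * ((n : ℝ) * (2 * ((n : ℝ) * (4 * ν)) * ((n : ℝ) * (4 * D)))) :=
              mul_le_mul_of_nonneg_left hS (by positivity)
          _ = 2 * (4 * ν) * (4 * D) := by field_simp
      have e2 : |(1 / (n : ℝ) ^ 4) * ((∑ i, a i) ^ 2 - (∑ i, a' i) ^ 2)| ≤
          2 * (4 * ν) * (4 * D) := by
        rw [abs_mul, abs_of_pos (by positivity : (0:ℝ) < 1 / (n : ℝ) ^ 4)]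
        calc (1 / (n : ℝ) ^ 4) * |(∑ i, a i) ^ 2 - (∑ i, a' i) ^ 2|
            ≤ (1 / (n : ℝ) ^ 4) *
              (2 * ((n : ℝ) * ((n : ℝ) * (4 * ν))) * ((n : ℝ) * ((n : ℝ) * (4 * D)))) :=
              mul_le_mul_of_nonneg_left hT (by positivity)
          _ = 2 * (4 * ν) * (4 * D) := by field_simp
      calc |4 * ((1 / (n : ℝ) ^ 3) * (∑ i, (a i) ^ 2 - ∑ i, (a' i) ^ 2)
             - (1 / (n : ℝ) ^ 4) * ((∑ i, a i) ^ 2 - (∑ i, a' i) ^ 2))|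
          = 4 * |(1 / (n : ℝ) ^ 3) * (∑ i, (a i) ^ 2 - ∑ i, (a' i) ^ 2)
             - (1 / (n : ℝ) ^ 4) * ((∑ i, a i) ^ 2 - (∑ i, a' i) ^ 2)| := by
            rw [abs_mul]; norm_num
        _ ≤ 4 * (|(1 / (n : ℝ) ^ 3) * (∑ i, (a i) ^ 2 - ∑ i, (a' i) ^ 2)|
             + |(1 / (n : ℝ) ^ 4) * ((∑ i, a i) ^ 2 - (∑ i, a' i) ^ 2)|) := by
            have := abs_sub ((1 / (n : ℝ) ^ 3) * (∑ i, (a i) ^ 2 - ∑ i, (a' i) ^ 2))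
              ((1 / (n : ℝ) ^ 4) * ((∑ i, a i) ^ 2 - (∑ i, a' i) ^ 2))
            linarith
        _ ≤ 4 * (2 * (4 * ν) * (4 * D) + 2 * (4 * ν) * (4 * D)) := by linarith
  · -- population part
    set μ : Measure (𝓧 × 𝓧) := P.prod Q with hμ_def
    have : IsProbabilityMeasure μ := by rw [hμ_def]; infer_instance
    -- pointwise bounds on hPair
    have hPb : ∀ (ω₀ : E), ω₀ ∈ Ω → ∀ u v : 𝓧 × 𝓧, |hPair (k ω₀) u v| ≤ 4 * ν := by
      intro ω₀ h₀ u v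
      obtain ⟨a1, b1⟩ := abs_le.mp (hbdd ω₀ h₀ u.1 v.1)
      obtain ⟨a2, b2⟩ := abs_le.mp (hbdd ω₀ h₀ u.2 v.2)
      obtain ⟨a3, b3⟩ := abs_le.mp (hbdd ω₀ h₀ u.1 v.2)
      obtain ⟨a4, b4⟩ := abs_le.mp (hbdd ω₀ h₀ v.1 u.2)
      rw [hPair, abs_le]
      constructor <;> [linarith; linarith]
    have hPd : ∀ u v : 𝓧 × 𝓧, |hPair (k ω) u v - hPair (k ω') u v| ≤ 4 * D := by
      intro u v
      obtain ⟨a1, b1⟩ := abs_le.mp (hLip ω hω ω' hω' u.1 v.1)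
      obtain ⟨a2, b2⟩ := abs_le.mp (hLip ω hω ω' hω' u.2 v.2)
      obtain ⟨a3, b3⟩ := abs_le.mp (hLip ω hω ω' hω' u.1 v.2)
      obtain ⟨a4, b4⟩ := abs_le.mp (hLip ω hω ω' hω' v.1 u.2)
      rw [hPair, hPair, abs_le]
      constructor <;> [linarith; linarith]
    -- measurability
    have bigmeas : ∀ (ω₀ : E), ω₀ ∈ Ω →
        Measurable (fun p : (𝓧 × 𝓧) × 𝓧 × 𝓧 => hPair (k ω₀) p.1 p.2) := by
      intro ω₀ h₀
      unfold hPair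
      exact ((((hmeas ω₀ h₀).comp (measurable_fst.fst.prodMk measurable_snd.fst)).add
        ((hmeas ω₀ h₀).comp (measurable_fst.snd.prodMk measurable_snd.snd))).sub
        ((hmeas ω₀ h₀).comp (measurable_fst.fst.prodMk measurable_snd.snd))).sub
        ((hmeas ω₀ h₀).comp (measurable_snd.fst.prodMk measurable_fst.snd))
    set F : (𝓧 × 𝓧) → ℝ := fun u => ∫ v, hPair (k ω) u v ∂μ with hF_def
    set F' : (𝓧 × 𝓧) → ℝ := fun u => ∫ v, hPair (k ω') u v ∂μ with hF'_def
    have hFm : StronglyMeasurable F := (bigmeas ω hω).stronglyMeasurable.integral_prod_right'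
    have hF'm : StronglyMeasurable F' := (bigmeas ω' hω').stronglyMeasurable.integral_prod_right'
    have hint : ∀ (ω₀ : E) (h₀ : ω₀ ∈ Ω) (u : 𝓧 × 𝓧),
        Integrable (fun v => hPair (k ω₀) u v) μ := by
      intro ω₀ h₀ u
      have hm : Measurable fun v : 𝓧 × 𝓧 => hPair (k ω₀) u v :=
        (bigmeas ω₀ h₀).comp measurable_prodMk_left
      exact integrable_of_abs_le hm.aestronglyMeasurable (hPb ω₀ h₀ u)
    have hFb : ∀ u, |F u| ≤ 4 * ν := fun u => abs_integral_le_of_abs_le (hPb ω hω u)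
    have hF'b : ∀ u, |F' u| ≤ 4 * ν := fun u => abs_integral_le_of_abs_le (hPb ω' hω' u)
    have hFd : ∀ u, |F u - F' u| ≤ 4 * D := fun u =>
      abs_integral_sub_le (hint ω hω u) (hint ω' hω' u) (hPd u)
    -- integrability of F, F', F*F, F'*F'
    have hFint : Integrable F μ := integrable_of_abs_le hFm.aestronglyMeasurable hFb
    have hF'int : Integrable F' μ := integrable_of_abs_le hF'm.aestronglyMeasurable hF'b
    have hFFb : ∀ u, |F u * F u| ≤ (4 * ν) * (4 * ν) := by
      intro u
      rw [abs_mul]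
      exact mul_le_mul (hFb u) (hFb u) (abs_nonneg _) (by linarith)
    have hF'F'b : ∀ u, |F' u * F' u| ≤ (4 * ν) * (4 * ν) := by
      intro u
      rw [abs_mul]
      exact mul_le_mul (hF'b u) (hF'b u) (abs_nonneg _) (by linarith)
    have hFFint : Integrable (fun u => F u * F u) μ :=
      integrable_of_abs_le (hFm.mul hFm).aestronglyMeasurable hFFb
    have hF'F'int : Integrable (fun u => F' u * F' u) μ :=
      integrable_of_abs_le (hF'm.mul hF'm).aestronglyMeasurable hF'F'b
    -- hCross equals ∫ F u * F u
    have hcross_eq : ∀ (ω₀ : E), ω₀ ∈ Ω →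
        hCross (k ω₀) P Q = ∫ u, (∫ v, hPair (k ω₀) u v ∂μ) * (∫ v, hPair (k ω₀) u v ∂μ) ∂μ := by
      intro ω₀ h₀
      rw [hCross, ← hμ_def]
      congr 1
      funext u
      have step1 : ∀ v : 𝓧 × 𝓧, (∫ w, hPair (k ω₀) u v * hPair (k ω₀) u w ∂μ) =
          hPair (k ω₀) u v * ∫ w, hPair (k ω₀) u w ∂μ := fun v =>
        integral_const_mul _ _
      simp_rw [step1]
      rw [integral_mul_const]
    have hcr : hCross (k ω) P Q = ∫ u, F u * F u ∂μ := hcross_eq ω hω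
    have hcr' : hCross (k ω') P Q = ∫ u, F' u * F' u ∂μ := hcross_eq ω' hω'
    have heta : etaPop (k ω) P Q = ∫ u, F u ∂μ := rfl
    have heta' : etaPop (k ω') P Q = ∫ u, F' u ∂μ := rfl
    -- bounds
    have eA : |(∫ u, F u * F u ∂μ) - ∫ u, F' u * F' u ∂μ| ≤ 2 * (4 * ν) * (4 * D) :=
      abs_integral_sub_le hFFint hF'F'int
        (fun u => abs_mul_sub_mul (hFb u) (hF'b u) (hFd u))
    have eB : |(∫ u, F u ∂μ) ^ 2 - (∫ u, F' u ∂μ) ^ 2| ≤ 2 * (4 * ν) * (4 * D) :=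
      abs_sq_sub_sq (abs_integral_le_of_abs_le hFb) (abs_integral_le_of_abs_le hF'b)
        (abs_integral_sub_le hFint hF'int hFd)
    rw [hRHS, sigmaSqPop, sigmaSqPop, hcr, hcr', heta, heta']
    have hsplit : 4 * ((∫ u, F u * F u ∂μ) - (∫ u, F u ∂μ) ^ 2)
        - 4 * ((∫ u, F' u * F' u ∂μ) - (∫ u, F' u ∂μ) ^ 2)
        = 4 * (((∫ u, F u * F u ∂μ) - ∫ u, F' u * F' u ∂μ)
          - ((∫ u, F u ∂μ) ^ 2 - (∫ u, F' u ∂μ) ^ 2)) := by ring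
    rw [hsplit]
    calc |4 * (((∫ u, F u * F u ∂μ) - ∫ u, F' u * F' u ∂μ)
          - ((∫ u, F u ∂μ) ^ 2 - (∫ u, F' u ∂μ) ^ 2))|
        = 4 * |((∫ u, F u * F u ∂μ) - ∫ u, F' u * F' u ∂μ)
          - ((∫ u, F u ∂μ) ^ 2 - (∫ u, F' u ∂μ) ^ 2)| := by rw [abs_mul]; norm_num
      _ ≤ 4 * (|(∫ u, F u * F u ∂μ) - ∫ u, F' u * F' u ∂μ|
          + |(∫ u, F u ∂μ) ^ 2 - (∫ u, F' u ∂μ) ^ 2|) := by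
          have := abs_sub ((∫ u, F u * F u ∂μ) - ∫ u, F' u * F' u ∂μ)
            ((∫ u, F u ∂μ) ^ 2 - (∫ u, F' u ∂μ) ^ 2)
          linarith
      _ ≤ 4 * (2 * (4 * ν) * (4 * D) + 2 * (4 * ν) * (4 * D)) := by linarith
end
end

section
/- Let φ_ω be a feedforward neural network with Λ layers: φ_ω^{(0)}(x) = x and φ_ω^{(ℓ)}(x) = σ^{(ℓ)}( W_ω^{(ℓ)}·φ_ω^{(ℓ−1)}(x) + b_ω^{(ℓ)} ), where each activation map σ^{(ℓ)} is 1-Lipschitz with σ^{(ℓ)}(0) = 0, and define ‖ω‖ = max over layers ℓ ∈ {1,…,Λ} of max( ‖W_ω^{(ℓ)}‖_op, ‖b_ω^{(ℓ)}‖ ). Suppose ‖ω‖ ≤ R and ‖ω'‖ ≤ R with R > 1. Then for every input x: (1) ‖φ_ω(x)‖ ≤ R^Λ·‖x‖ + (R/(R−1))·(R^Λ − 1); (2) ‖φ_ω(x) − φ_{ω'}(x)‖ ≤ ( Λ·R^{Λ−1}·( ‖x‖ + R/(R−1) ) − (R^Λ − 1)/(R−1)² )·‖ω − ω'‖, where ‖ω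 − ω'‖ is computed with componentwise differences of the weight matrices and bias vectors. If furthermore R ≥ 2, then (3) ‖φ_ω(x)‖ ≤ R^Λ·(‖x‖ + 2) and (4) ‖φ_ω(x) − φ_{ω'}(x)‖ ≤ Λ·R^{Λ−1}·(‖x‖ + 2)·‖ω − ω'‖. -/
noncomputable section

/-- A feedforward network: `net W b σa 0 x = x`,
`net W b σa (ℓ+1) x = σa ℓ (W ℓ (net W b σa ℓ x) + b ℓ)`. -/
def net {E : ℕ → Type*} [∀ ℓ, NormedAddCommGroup (E ℓ)] [∀ ℓ, NormedSpace ℝ (E ℓ)]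
    (W : ∀ ℓ : ℕ, E ℓ →L[ℝ] E (ℓ + 1)) (b : ∀ ℓ : ℕ, E (ℓ + 1))
    (σa : ∀ ℓ : ℕ, E (ℓ + 1) → E (ℓ + 1)) : ∀ ℓ : ℕ, E 0 → E ℓ
  | 0 => id
  | (ℓ + 1) => fun x => σa ℓ (W ℓ (net W b σa ℓ x) + b ℓ)

/-- Growth and parameter-Lipschitz bounds for a feedforward network with 1-Lipschitz
activations vanishing at `0`, whose weight operator norms and bias norms are at most
`R > 1`.  Here `Δ = ‖ω - ω'‖` is the maximum over layers of the operator norm of the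
weight difference and the norm of the bias difference. -/
theorem network_growth_and_lipschitz {E : ℕ → Type*}
    [∀ ℓ, NormedAddCommGroup (E ℓ)] [∀ ℓ, NormedSpace ℝ (E ℓ)]
    (Λ : ℕ)
    (W W' : ∀ ℓ : ℕ, E ℓ →L[ℝ] E (ℓ + 1)) (b b' : ∀ ℓ : ℕ, E (ℓ + 1))
    (σa : ∀ ℓ : ℕ, E (ℓ + 1) → E (ℓ + 1))
    (hσLip : ∀ ℓ, LipschitzWith 1 (σa ℓ)) (hσ0 : ∀ ℓ, σa ℓ 0 = 0)
    (R : ℝ) (hR : 1 < R)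
    (hW : ∀ ℓ < Λ, ‖W ℓ‖ ≤ R) (hb : ∀ ℓ < Λ, ‖b ℓ‖ ≤ R)
    (hW' : ∀ ℓ < Λ, ‖W' ℓ‖ ≤ R) (hb' : ∀ ℓ < Λ, ‖b' ℓ‖ ≤ R)
    (Δ : ℝ)
    (hΔ : Δ = (((Finset.range Λ).sup fun ℓ => max ‖W ℓ - W' ℓ‖₊ ‖b ℓ - b' ℓ‖₊ : NNReal) : ℝ))
    (x : E 0) :
    ‖net W b σa Λ x‖ ≤ R ^ Λ * ‖x‖ + (R / (R - 1)) * (R ^ Λ - 1) ∧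
    ‖net W b σa Λ x - net W' b' σa Λ x‖ ≤
      ((Λ : ℝ) * R ^ (Λ - 1) * (‖x‖ + R / (R - 1)) - (R ^ Λ - 1) / (R - 1) ^ 2) * Δ ∧
    (2 ≤ R → ‖net W b σa Λ x‖ ≤ R ^ Λ * (‖x‖ + 2)) ∧
    (2 ≤ R → ‖net W b σa Λ x - net W' b' σa Λ x‖ ≤
      (Λ : ℝ) * R ^ (Λ - 1) * (‖x‖ + 2) * Δ) := by
  have hR0 : (0:ℝ) < R := lt_trans one_pos hR
  have hR1 : (0:ℝ) < R - 1 := by linarith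
  have hR1' : R - 1 ≠ 0 := ne_of_gt hR1
  have hΔ0 : 0 ≤ Δ := by rw [hΔ]; exact NNReal.coe_nonneg _
  have hσ : ∀ ℓ (v : E (ℓ+1)), ‖σa ℓ v‖ ≤ ‖v‖ := by
    intro ℓ v
    have h := (hσLip ℓ).dist_le_mul v 0
    simpa [hσ0 ℓ, dist_eq_norm] using h
  have hσd : ∀ ℓ (u v : E (ℓ+1)), ‖σa ℓ u - σa ℓ v‖ ≤ ‖u - v‖ := by
    intro ℓ u v
    have h := (hσLip ℓ).dist_le_mul u v
    simpa [dist_eq_norm] using h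
  have hWd : ∀ ℓ, ℓ < Λ → ‖W ℓ - W' ℓ‖ ≤ Δ := by
    intro ℓ hℓ
    rw [hΔ]
    have h := Finset.le_sup (f := fun ℓ => max ‖W ℓ - W' ℓ‖₊ ‖b ℓ - b' ℓ‖₊)
      (Finset.mem_range.mpr hℓ)
    have h2 : ‖W ℓ - W' ℓ‖₊ ≤ (Finset.range Λ).sup
        (fun ℓ => max ‖W ℓ - W' ℓ‖₊ ‖b ℓ - b' ℓ‖₊) := le_trans (le_max_left _ _) h
    exact_mod_cast h2
  have hbd : ∀ ℓ, ℓ < Λ → ‖b ℓ - b' ℓ‖ ≤ Δ := by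
    intro ℓ hℓ
    rw [hΔ]
    have h := Finset.le_sup (f := fun ℓ => max ‖W ℓ - W' ℓ‖₊ ‖b ℓ - b' ℓ‖₊)
      (Finset.mem_range.mpr hℓ)
    have h2 : ‖b ℓ - b' ℓ‖₊ ≤ (Finset.range Λ).sup
        (fun ℓ => max ‖W ℓ - W' ℓ‖₊ ‖b ℓ - b' ℓ‖₊) := le_trans (le_max_right _ _) h
    exact_mod_cast h2
  set G : ℕ → ℝ := fun ℓ => R ^ ℓ * ‖x‖ + R * (R ^ ℓ - 1) / (R - 1) with hG
  have hGstep : ∀ ℓ : ℕ, R * G ℓ + R = G (ℓ+1) := by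
    intro ℓ; simp only [hG]; field_simp; ring
  have growth : ∀ (Wa : ∀ ℓ : ℕ, E ℓ →L[ℝ] E (ℓ+1)) (ba : ∀ ℓ : ℕ, E (ℓ+1)),
      (∀ ℓ < Λ, ‖Wa ℓ‖ ≤ R) → (∀ ℓ < Λ, ‖ba ℓ‖ ≤ R) →
      ∀ ℓ, ℓ ≤ Λ → ‖net Wa ba σa ℓ x‖ ≤ G ℓ := by
    intro Wa ba hWa hba ℓ
    induction ℓ with
    | zero => intro _; simp [net, hG]
    | succ ℓ ih =>
      intro hℓ
      have hℓ' : ℓ < Λ := hℓ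
      have ihl := ih (le_of_lt hℓ')
      have hdef : net Wa ba σa (ℓ+1) x = σa ℓ (Wa ℓ (net Wa ba σa ℓ x) + ba ℓ) := rfl
      rw [hdef, ← hGstep ℓ]
      calc ‖σa ℓ (Wa ℓ (net Wa ba σa ℓ x) + ba ℓ)‖
          ≤ ‖Wa ℓ (net Wa ba σa ℓ x) + ba ℓ‖ := hσ ℓ _
        _ ≤ ‖Wa ℓ (net Wa ba σa ℓ x)‖ + ‖ba ℓ‖ := norm_add_le _ _
        _ ≤ ‖Wa ℓ‖ * ‖net Wa ba σa ℓ x‖ + R :=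
            add_le_add ((Wa ℓ).le_opNorm _) (hba ℓ hℓ')
        _ ≤ R * G ℓ + R := by
            have h3 : ‖Wa ℓ‖ * ‖net Wa ba σa ℓ x‖ ≤ R * G ℓ :=
              le_trans (mul_le_mul_of_nonneg_right (hWa ℓ hℓ') (norm_nonneg _))
                (mul_le_mul_of_nonneg_left ihl (le_of_lt hR0))
            linarith
  set S : ℕ → ℝ := fun ℓ => (ℓ : ℝ) * R ^ (ℓ - 1) * (‖x‖ + R / (R - 1)) -
      (R ^ ℓ - 1) / (R - 1) ^ 2 with hS
  have hSstep : ∀ ℓ : ℕ, R * S ℓ + (G ℓ + 1) = S (ℓ+1) := by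
    intro ℓ
    cases ℓ with
    | zero => simp only [hS, hG]; push_cast; field_simp; ring
    | succ n =>
      simp only [hS, hG, Nat.succ_sub_one]
      push_cast
      field_simp
      ring
  have lip : ∀ ℓ, ℓ ≤ Λ → ‖net W b σa ℓ x - net W' b' σa ℓ x‖ ≤ Δ * S ℓ := by
    intro ℓ
    induction ℓ with
    | zero => intro _; simp [net, hS]
    | succ ℓ ih =>
      intro hℓ
      have hℓ' : ℓ < Λ := hℓ
      have ihl := ih (le_of_lt hℓ')
      set u := net W b σa ℓ x with hu
      set u' := net W' b' σa ℓ x with hu'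
      have hdef : net W b σa (ℓ+1) x = σa ℓ (W ℓ u + b ℓ) := rfl
      have hdef' : net W' b' σa (ℓ+1) x = σa ℓ (W' ℓ u' + b' ℓ) := rfl
      have key : (W ℓ u + b ℓ) - (W' ℓ u' + b' ℓ) =
          W ℓ (u - u') + ((W ℓ - W' ℓ) u' + (b ℓ - b' ℓ)) := by
        simp only [map_sub, ContinuousLinearMap.sub_apply]
        abel
      have hgu' : ‖u'‖ ≤ G ℓ := growth W' b' hW' hb' ℓ (le_of_lt hℓ')
      rw [hdef, hdef', ← hSstep ℓ]
      calc ‖σa ℓ (W ℓ u + b ℓ) - σa ℓ (W' ℓ u' + b' ℓ)‖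
          ≤ ‖(W ℓ u + b ℓ) - (W' ℓ u' + b' ℓ)‖ := hσd ℓ _ _
        _ = ‖W ℓ (u - u') + ((W ℓ - W' ℓ) u' + (b ℓ - b' ℓ))‖ := by rw [key]
        _ ≤ ‖W ℓ (u - u')‖ + (‖(W ℓ - W' ℓ) u'‖ + ‖b ℓ - b' ℓ‖) :=
            le_trans (norm_add_le _ _) (by gcongr; exact norm_add_le _ _)
        _ ≤ R * (Δ * S ℓ) + (Δ * G ℓ + Δ) := by
            refine add_le_add ?_ (add_le_add ?_ (hbd ℓ hℓ'))
            · exact le_trans ((W ℓ).le_opNorm _)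
                (le_trans (mul_le_mul_of_nonneg_right (hW ℓ hℓ') (norm_nonneg _))
                  (mul_le_mul_of_nonneg_left ihl (le_of_lt hR0)))
            · exact le_trans ((W ℓ - W' ℓ).le_opNorm _)
                (mul_le_mul (hWd ℓ hℓ') hgu' (norm_nonneg _) hΔ0)
        _ = Δ * (R * S ℓ + (G ℓ + 1)) := by ring
  have h1 : ‖net W b σa Λ x‖ ≤ R ^ Λ * ‖x‖ + (R / (R - 1)) * (R ^ Λ - 1) := by
    have h := growth W b hW hb Λ le_rfl
    have heq : G Λ = R ^ Λ * ‖x‖ + (R / (R - 1)) * (R ^ Λ - 1) := by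
      simp only [hG]; ring
    linarith [heq ▸ h]
  have h2 : ‖net W b σa Λ x - net W' b' σa Λ x‖ ≤
      ((Λ : ℝ) * R ^ (Λ - 1) * (‖x‖ + R / (R - 1)) - (R ^ Λ - 1) / (R - 1) ^ 2) * Δ := by
    have h := lip Λ le_rfl
    calc ‖net W b σa Λ x - net W' b' σa Λ x‖ ≤ Δ * S Λ := h
      _ = ((Λ : ℝ) * R ^ (Λ - 1) * (‖x‖ + R / (R - 1)) - (R ^ Λ - 1) / (R - 1) ^ 2) * Δ := by
          simp only [hS]; ring
  refine ⟨h1, h2, ?_, ?_⟩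
  · intro hR2
    have hdiv : R / (R - 1) ≤ 2 := by rw [div_le_iff₀ hR1]; linarith
    have hp1 : (1:ℝ) ≤ R ^ Λ := one_le_pow₀ (le_of_lt hR)
    have : (R / (R - 1)) * (R ^ Λ - 1) ≤ 2 * R ^ Λ := by
      have hdn : 0 ≤ R / (R - 1) := div_nonneg (le_of_lt hR0) (le_of_lt hR1)
      nlinarith
    nlinarith [h1]
  · intro hR2
    have hdiv : R / (R - 1) ≤ 2 := by rw [div_le_iff₀ hR1]; linarith
    have hp1 : (1:ℝ) ≤ R ^ Λ := one_le_pow₀ (le_of_lt hR)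
    have hcoef : (Λ : ℝ) * R ^ (Λ - 1) * (‖x‖ + R / (R - 1)) - (R ^ Λ - 1) / (R - 1) ^ 2 ≤
        (Λ : ℝ) * R ^ (Λ - 1) * (‖x‖ + 2) := by
      have hnn : 0 ≤ (Λ : ℝ) * R ^ (Λ - 1) :=
        mul_nonneg (Nat.cast_nonneg _) (le_of_lt (pow_pos hR0 _))
      have hD : 0 ≤ (R ^ Λ - 1) / (R - 1) ^ 2 :=
        div_nonneg (by linarith) (sq_nonneg _)
      nlinarith
    calc ‖net W b σa Λ x - net W' b' σa Λ x‖ ≤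
        ((Λ : ℝ) * R ^ (Λ - 1) * (‖x‖ + R / (R - 1)) - (R ^ Λ - 1) / (R - 1) ^ 2) * Δ := h2
      _ ≤ (Λ : ℝ) * R ^ (Λ - 1) * (‖x‖ + 2) * Δ :=
          mul_le_mul_of_nonneg_right hcoef hΔ0
end
end

section
/- Let b ∈ ℝ^D have at least one positive entry, let A ∈ ℝ^{D×D} be symmetric positive semidefinite, let λ > 0 and Q' > 0, and let Ω = { ω ∈ ℝ^D : ω_i ≥ 0 for all i, Σ_i ω_i = Q' }. Define Ĵ_λ(ω) = (ω^T b) / sqrt( ω^T (A + λI) ω ). If ω̃ is a minimizer of ω^T (A + λI) ω over the convex set { ω ∈ ℝ^D : ω_i ≥ 0 for all i, ω^T b = 1 }, then ω̂ = (Q' / Σ_i ω̃_i)·ω̃ is a maximizer of Ĵ_λ over Ω. Moreover, in the multiple-kernel-learning setting where (H_{ij})_ℓ = k_ℓ(X_i,X_j) + k_ℓ(Y_i,Y_j) − k_ℓ(X_i,Y_j) − k_ℓ(X_j,Y_i) ∈ ℝ^D, b = (1/(n(n−1)))·Σ_{i≠j} H_{ij}, and A = (4/n³)·Σ_i (Σ_j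 H_{ij})(Σ_j H_{ij})^T − (4/n⁴)·(Σ_{ij} H_{ij})(Σ_{ij} H_{ij})^T, the MMD estimator and variance estimator for the combined kernel k_ω = Σ_ℓ ω_ℓ k_ℓ satisfy η̂_ω = ω^T b and σ̂_ω² = ω^T A ω (so in particular A is positive semidefinite). -/
open MeasureTheory Finset

noncomputable section

open Matrix



private lemma sumDot {D m : ℕ} (f : Fin m → Fin D → ℝ) (v : Fin D → ℝ) :
    (∑ i : Fin m, f i) ⬝ᵥ v = ∑ i : Fin m, f i ⬝ᵥ v := by
  simp only [dotProduct, Finset.sum_apply, Finset.sum_mul]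
  exact Finset.sum_comm

private lemma dotVMV {D : ℕ} (u ω : Fin D → ℝ) :
    ω ⬝ᵥ (vecMulVec u u *ᵥ ω) = (u ⬝ᵥ ω) ^ 2 := by
  simp only [dotProduct, vecMulVec_apply, mulVec, sq]
  rw [Finset.sum_mul_sum]
  simp only [Finset.mul_sum]
  exact Finset.sum_congr rfl fun i _ => Finset.sum_congr rfl fun j _ => by ring

private lemma sumMulVec {D m : ℕ} (M : Fin m → Matrix (Fin D) (Fin D) ℝ) (v : Fin D → ℝ) :
    (∑ i : Fin m, M i) *ᵥ v = ∑ i : Fin m, (M i *ᵥ v) := by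
  ext j
  simp only [mulVec, dotProduct, Matrix.sum_apply, Finset.sum_apply, Finset.sum_mul]
  exact Finset.sum_comm



private lemma qpOpt {D : ℕ} (A' : Matrix (Fin D) (Fin D) ℝ) (b' : Fin D → ℝ)
    (lam Q' : ℝ) (tilde : Fin D → ℝ)
    (hA' : A'.PosSemidef) (hlam : 0 < lam) (hQ : 0 < Q')
    (htn : ∀ i, 0 ≤ tilde i) (htb : tilde ⬝ᵥ b' = 1)
    (hopt : ∀ ω : Fin D → ℝ, (∀ i, 0 ≤ ω i) → ω ⬝ᵥ b' = 1 →
        tilde ⬝ᵥ ((A' + lam • 1) *ᵥ tilde) ≤ ω ⬝ᵥ ((A' + lam • 1) *ᵥ ω)) :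
    ((∀ i, 0 ≤ ((Q' / ∑ i', tilde i') • tilde) i) ∧
     (∑ i, ((Q' / ∑ i', tilde i') • tilde) i) = Q' ∧
     ∀ ω : Fin D → ℝ, (∀ i, 0 ≤ ω i) → (∑ i, ω i) = Q' →
       (ω ⬝ᵥ b') / Real.sqrt (ω ⬝ᵥ ((A' + lam • 1) *ᵥ ω)) ≤
         (((Q' / ∑ i', tilde i') • tilde) ⬝ᵥ b') /
           Real.sqrt (((Q' / ∑ i', tilde i') • tilde) ⬝ᵥ
             ((A' + lam • 1) *ᵥ ((Q' / ∑ i', tilde i') • tilde)))) := by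
  set M : Matrix (Fin D) (Fin D) ℝ := A' + lam • 1 with hM
  have hMq : ∀ v : Fin D → ℝ, v ⬝ᵥ (M *ᵥ v) = v ⬝ᵥ (A' *ᵥ v) + lam * (v ⬝ᵥ v) := by
    intro v
    rw [hM, add_mulVec, dotProduct_add, smul_mulVec, one_mulVec, dotProduct_smul,
      smul_eq_mul]
  have hMpos : ∀ v : Fin D → ℝ, v ≠ 0 → 0 < v ⬝ᵥ (M *ᵥ v) := by
    intro v hv
    rw [hMq]
    have h1 : 0 ≤ v ⬝ᵥ (A' *ᵥ v) := by
      have := hA'.dotProduct_mulVec_nonneg v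
      simpa using this
    have h2 : 0 < v ⬝ᵥ v := by
      rcases lt_or_eq_of_le (Finset.sum_nonneg fun i _ => mul_self_nonneg (v i) :
          (0:ℝ) ≤ v ⬝ᵥ v) with h | h
      · exact h
      · exact absurd (dotProduct_self_eq_zero.mp h.symm) hv
    nlinarith
  have htne : tilde ≠ 0 := by
    intro h
    rw [h, zero_dotProduct] at htb
    exact one_ne_zero htb.symm
  have hc : 0 < ∑ i', tilde i' := by
    obtain ⟨i, hi⟩ := Function.ne_iff.mp htne
    have : 0 < tilde i := lt_of_le_of_ne (htn i) (Ne.symm hi)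
    exact lt_of_lt_of_le this (Finset.single_le_sum (fun j _ => htn j) (Finset.mem_univ i))
  set t : ℝ := Q' / ∑ i', tilde i' with ht
  have htpos : 0 < t := div_pos hQ hc
  have hq : 0 < tilde ⬝ᵥ (M *ᵥ tilde) := hMpos tilde htne
  refine ⟨fun i => by simpa using mul_nonneg htpos.le (htn i), ?_, ?_⟩
  · simp only [Pi.smul_apply, smul_eq_mul, ← Finset.mul_sum, ht]
    exact div_mul_cancel₀ Q' hc.ne'
  · intro ω hω hωs
    have hrhsnum : (t • tilde) ⬝ᵥ b' = t := by
      rw [smul_dotProduct, htb, smul_eq_mul, mul_one]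
    have hrhsden : (t • tilde) ⬝ᵥ (M *ᵥ (t • tilde)) = t ^ 2 * (tilde ⬝ᵥ (M *ᵥ tilde)) := by
      rw [mulVec_smul, smul_dotProduct, dotProduct_smul, smul_eq_mul, smul_eq_mul]; ring
    rw [hrhsnum, hrhsden, Real.sqrt_mul (sq_nonneg t), Real.sqrt_sq htpos.le]
    have hsq : 0 < Real.sqrt (tilde ⬝ᵥ (M *ᵥ tilde)) := Real.sqrt_pos.mpr hq
    rw [show t / (t * Real.sqrt (tilde ⬝ᵥ (M *ᵥ tilde))) =
        1 / Real.sqrt (tilde ⬝ᵥ (M *ᵥ tilde)) by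
      rw [div_mul_eq_div_div, div_self htpos.ne']]
    rcases le_or_gt (ω ⬝ᵥ b') 0 with hβ | hβ
    · calc (ω ⬝ᵥ b') / Real.sqrt (ω ⬝ᵥ (M *ᵥ ω)) ≤ 0 :=
            div_nonpos_of_nonpos_of_nonneg hβ (Real.sqrt_nonneg _)
        _ ≤ 1 / Real.sqrt (tilde ⬝ᵥ (M *ᵥ tilde)) := by positivity
    · have hω0 : ω ≠ 0 := by
        intro h; rw [h, zero_dotProduct] at hβ; exact lt_irrefl 0 hβ
      have hqω : 0 < ω ⬝ᵥ (M *ᵥ ω) := hMpos ω hω0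
      have key : (ω ⬝ᵥ b')⁻¹ • ω ⬝ᵥ b' = 1 := by
        rw [smul_dotProduct, smul_eq_mul, inv_mul_cancel₀ hβ.ne']
      have hkey := hopt ((ω ⬝ᵥ b')⁻¹ • ω)
        (fun i => by simpa using mul_nonneg (inv_nonneg.mpr hβ.le) (hω i)) key
      have hscale : ((ω ⬝ᵥ b')⁻¹ • ω) ⬝ᵥ (M *ᵥ ((ω ⬝ᵥ b')⁻¹ • ω)) =
          ((ω ⬝ᵥ b')⁻¹) ^ 2 * (ω ⬝ᵥ (M *ᵥ ω)) := by
        rw [mulVec_smul, smul_dotProduct, dotProduct_smul, smul_eq_mul, smul_eq_mul]; ring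
      rw [hscale] at hkey
      have hb2 : (ω ⬝ᵥ b') ^ 2 * (tilde ⬝ᵥ (M *ᵥ tilde)) ≤ ω ⬝ᵥ (M *ᵥ ω) := by
        have h2 : 0 < (ω ⬝ᵥ b') ^ 2 := by positivity
        calc (ω ⬝ᵥ b') ^ 2 * (tilde ⬝ᵥ (M *ᵥ tilde))
            ≤ (ω ⬝ᵥ b') ^ 2 * (((ω ⬝ᵥ b')⁻¹) ^ 2 * (ω ⬝ᵥ (M *ᵥ ω))) :=
              mul_le_mul_of_nonneg_left hkey h2.le
          _ = ω ⬝ᵥ (M *ᵥ ω) := by field_simp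
      rw [div_le_div_iff₀ (Real.sqrt_pos.mpr hqω) hsq]
      calc (ω ⬝ᵥ b') * Real.sqrt (tilde ⬝ᵥ (M *ᵥ tilde))
          = Real.sqrt ((ω ⬝ᵥ b') ^ 2 * (tilde ⬝ᵥ (M *ᵥ tilde))) := by
            rw [Real.sqrt_mul (sq_nonneg _), Real.sqrt_sq hβ.le]
        _ ≤ Real.sqrt (ω ⬝ᵥ (M *ᵥ ω)) := Real.sqrt_le_sqrt hb2
        _ = 1 * Real.sqrt (ω ⬝ᵥ (M *ᵥ ω)) := (one_mul _).symm

private lemma dotSum {D m : ℕ} (v : Fin D → ℝ) (f : Fin m → Fin D → ℝ) :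
    v ⬝ᵥ (∑ i : Fin m, f i) = ∑ i : Fin m, v ⬝ᵥ f i := by
  simp only [dotProduct, Finset.sum_apply, Finset.mul_sum]
  exact Finset.sum_comm

section MKL
variable {𝓧 : Type*} {D n : ℕ} (k : Fin D → 𝓧 → 𝓧 → ℝ) (x y : Fin n → 𝓧)
  (Hvec : Fin n → Fin n → Fin D → ℝ)

private lemma Hcomb
    (hHvec : ∀ i j ℓ, Hvec i j ℓ =
      k ℓ (x i) (x j) + k ℓ (y i) (y j) - k ℓ (x i) (y j) - k ℓ (x j) (y i))
    (ω : Fin D → ℝ) (i j : Fin n) :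
    Hmat (fun a b => ∑ ℓ : Fin D, ω ℓ * k ℓ a b) (x, y) i j = ∑ ℓ : Fin D, ω ℓ * Hvec i j ℓ := by
  simp only [Hmat, hHvec, mul_add, mul_sub, Finset.sum_add_distrib, Finset.sum_sub_distrib]

private lemma etaComb
    (hHvec : ∀ i j ℓ, Hvec i j ℓ =
      k ℓ (x i) (x j) + k ℓ (y i) (y j) - k ℓ (x i) (y j) - k ℓ (x j) (y i))
    (bb : Fin D → ℝ)
    (hbb : bb = (1 / ((n : ℝ) * ((n : ℝ) - 1))) •
      ∑ i : Fin n, ∑ j ∈ Finset.univ.erase i, Hvec i j) (ω : Fin D → ℝ) :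
    etaHat (fun a b => ∑ ℓ : Fin D, ω ℓ * k ℓ a b) (x, y) = ω ⬝ᵥ bb := by
  have hH : ∀ i j, Hmat (fun a b => ∑ ℓ : Fin D, ω ℓ * k ℓ a b) (x, y) i j
      = ∑ ℓ : Fin D, ω ℓ * Hvec i j ℓ := Hcomb k x y Hvec hHvec ω
  have swap : ∑ i : Fin n, ∑ j ∈ Finset.univ.erase i, ∑ ℓ : Fin D, ω ℓ * Hvec i j ℓ
      = ∑ ℓ : Fin D, ω ℓ * ∑ i : Fin n, ∑ j ∈ Finset.univ.erase i, Hvec i j ℓ := by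
    simp only [Finset.mul_sum]
    rw [Finset.sum_comm]
    exact Finset.sum_congr rfl fun i _ => Finset.sum_comm
  rw [etaHat]
  simp only [hH]
  rw [swap, hbb, Finset.mul_sum]
  simp only [dotProduct, Pi.smul_apply, Finset.sum_apply, smul_eq_mul]
  exact Finset.sum_congr rfl fun ℓ _ => by ring

private lemma quadA (A : Matrix (Fin D) (Fin D) ℝ)
    (hA : A = (4 / (n : ℝ) ^ 3) •
        ∑ i : Fin n, vecMulVec (∑ j : Fin n, Hvec i j) (∑ j : Fin n, Hvec i j)
      - (4 / (n : ℝ) ^ 4) •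
        vecMulVec (∑ i : Fin n, ∑ j : Fin n, Hvec i j)
          (∑ i : Fin n, ∑ j : Fin n, Hvec i j)) (v : Fin D → ℝ) :
    v ⬝ᵥ (A *ᵥ v) = 4 / (n : ℝ) ^ 3 * ∑ i : Fin n, ((∑ j : Fin n, Hvec i j) ⬝ᵥ v) ^ 2
      - 4 / (n : ℝ) ^ 4 * (∑ i : Fin n, (∑ j : Fin n, Hvec i j) ⬝ᵥ v) ^ 2 := by
  rw [hA, sub_mulVec, dotProduct_sub, smul_mulVec, smul_mulVec,
    dotProduct_smul, dotProduct_smul, smul_eq_mul, smul_eq_mul, sumMulVec, dotSum]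
  simp only [dotVMV]
  rw [sumDot]

private lemma Apsd (A : Matrix (Fin D) (Fin D) ℝ)
    (hA : A = (4 / (n : ℝ) ^ 3) •
        ∑ i : Fin n, vecMulVec (∑ j : Fin n, Hvec i j) (∑ j : Fin n, Hvec i j)
      - (4 / (n : ℝ) ^ 4) •
        vecMulVec (∑ i : Fin n, ∑ j : Fin n, Hvec i j)
          (∑ i : Fin n, ∑ j : Fin n, Hvec i j)) :
    A.PosSemidef := by
  rw [posSemidef_iff_dotProduct_mulVec]
  constructor
  · ext i j
    simp only [Matrix.conjTranspose_apply, hA, Matrix.sub_apply, Matrix.smul_apply,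
      Matrix.sum_apply, vecMulVec_apply, smul_eq_mul, star_trivial]
    ring_nf
    rw [Finset.sum_congr rfl fun m _ => mul_comm ((∑ j' : Fin n, Hvec m j') j)
      ((∑ j' : Fin n, Hvec m j') i)]
  · intro v
    have hv : star v = v := funext fun i => star_trivial _
    rw [hv, quadA Hvec A hA]
    set g : Fin n → ℝ := fun i => (∑ j : Fin n, Hvec i j) ⬝ᵥ v with hg
    rcases Nat.eq_zero_or_pos n with hn | hn
    · subst hn
      simp
    · have hn' : (0 : ℝ) < (n : ℝ) := by exact_mod_cast hn
      have hcheb : (∑ i : Fin n, g i) ^ 2 ≤ (n : ℝ) * ∑ i : Fin n, g i ^ 2 := by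
        have := sq_sum_le_card_mul_sum_sq (s := (Finset.univ : Finset (Fin n))) (f := g)
        simpa using this
      have h1 : 4 / (n : ℝ) ^ 4 * (∑ i : Fin n, g i) ^ 2
          ≤ 4 / (n : ℝ) ^ 4 * ((n : ℝ) * ∑ i : Fin n, g i ^ 2) :=
        mul_le_mul_of_nonneg_left hcheb (by positivity)
      have h2 : 4 / (n : ℝ) ^ 4 * ((n : ℝ) * ∑ i : Fin n, g i ^ 2)
          = 4 / (n : ℝ) ^ 3 * ∑ i : Fin n, g i ^ 2 := by
        field_simp
      linarith

private lemma sigmaComb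
    (hHvec : ∀ i j ℓ, Hvec i j ℓ =
      k ℓ (x i) (x j) + k ℓ (y i) (y j) - k ℓ (x i) (y j) - k ℓ (x j) (y i))
    (A : Matrix (Fin D) (Fin D) ℝ)
    (hA : A = (4 / (n : ℝ) ^ 3) •
        ∑ i : Fin n, vecMulVec (∑ j : Fin n, Hvec i j) (∑ j : Fin n, Hvec i j)
      - (4 / (n : ℝ) ^ 4) •
        vecMulVec (∑ i : Fin n, ∑ j : Fin n, Hvec i j)
          (∑ i : Fin n, ∑ j : Fin n, Hvec i j)) (ω : Fin D → ℝ) :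
    sigmaHatSq (fun a b => ∑ ℓ : Fin D, ω ℓ * k ℓ a b) (x, y) = ω ⬝ᵥ (A *ᵥ ω) := by
  have hH : ∀ i j, Hmat (fun a b => ∑ ℓ : Fin D, ω ℓ * k ℓ a b) (x, y) i j
      = ∑ ℓ : Fin D, ω ℓ * Hvec i j ℓ := Hcomb k x y Hvec hHvec ω
  have hrow : ∀ i : Fin n, ∑ j : Fin n, ∑ ℓ : Fin D, ω ℓ * Hvec i j ℓ
      = (∑ j : Fin n, Hvec i j) ⬝ᵥ ω := by
    intro i
    rw [Finset.sum_comm]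
    simp only [dotProduct, Finset.sum_apply, Finset.sum_mul]
    exact Finset.sum_congr rfl fun ℓ _ => Finset.sum_congr rfl fun j _ => mul_comm _ _
  rw [sigmaHatSq, quadA Hvec A hA]
  simp only [hH, hrow]
  ring
end MKL


/-- Closed-form kernel selection for multiple kernel learning: the maximizer of the
regularized criterion `Ĵ_λ(ω) = (ωᵀb)/sqrt(ωᵀ(A+λI)ω)` over the simplex
`{ω ≥ 0, ∑ᵢ ωᵢ = Q'}` is obtained by rescaling the solution of the convex quadratic
program `min ωᵀ(A+λI)ω` over `{ω ≥ 0, ωᵀb = 1}`; moreover, in the MKL setting the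
MMD estimator and variance estimator are `η̂_ω = ωᵀb` and `σ̂_ω² = ωᵀAω`
(so in particular `A` is positive semidefinite). -/
theorem mkl_quadratic_program {𝓧 : Type*} (D n : ℕ)
    (k : Fin D → 𝓧 → 𝓧 → ℝ) (hsymm : ∀ ℓ x y, k ℓ x y = k ℓ y x)
    (x y : Fin n → 𝓧)
    (Hvec : Fin n → Fin n → Fin D → ℝ)
    (hHvec : ∀ i j ℓ, Hvec i j ℓ =
      k ℓ (x i) (x j) + k ℓ (y i) (y j) - k ℓ (x i) (y j) - k ℓ (x j) (y i))
    (bb : Fin D → ℝ)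
    (hbb : bb = (1 / ((n : ℝ) * ((n : ℝ) - 1))) •
      ∑ i : Fin n, ∑ j ∈ Finset.univ.erase i, Hvec i j)
    (A : Matrix (Fin D) (Fin D) ℝ)
    (hA : A = (4 / (n : ℝ) ^ 3) •
        ∑ i : Fin n, vecMulVec (∑ j : Fin n, Hvec i j) (∑ j : Fin n, Hvec i j)
      - (4 / (n : ℝ) ^ 4) •
        vecMulVec (∑ i : Fin n, ∑ j : Fin n, Hvec i j)
          (∑ i : Fin n, ∑ j : Fin n, Hvec i j)) :
    -- generic statement: rescaling the QP solution maximizes `Ĵ_λ` over the simplex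
    (∀ (A' : Matrix (Fin D) (Fin D) ℝ) (b' : Fin D → ℝ) (lam Q' : ℝ)
        (tilde : Fin D → ℝ),
      A'.PosSemidef → (∃ i, 0 < b' i) → 0 < lam → 0 < Q' →
      (∀ i, 0 ≤ tilde i) → tilde ⬝ᵥ b' = 1 →
      (∀ ω : Fin D → ℝ, (∀ i, 0 ≤ ω i) → ω ⬝ᵥ b' = 1 →
        tilde ⬝ᵥ ((A' + lam • 1) *ᵥ tilde) ≤ ω ⬝ᵥ ((A' + lam • 1) *ᵥ ω)) →
      ((∀ i, 0 ≤ ((Q' / ∑ i', tilde i') • tilde) i) ∧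
       (∑ i, ((Q' / ∑ i', tilde i') • tilde) i) = Q' ∧
       ∀ ω : Fin D → ℝ, (∀ i, 0 ≤ ω i) → (∑ i, ω i) = Q' →
         (ω ⬝ᵥ b') / Real.sqrt (ω ⬝ᵥ ((A' + lam • 1) *ᵥ ω)) ≤
           (((Q' / ∑ i', tilde i') • tilde) ⬝ᵥ b') /
             Real.sqrt (((Q' / ∑ i', tilde i') • tilde) ⬝ᵥ
               ((A' + lam • 1) *ᵥ ((Q' / ∑ i', tilde i') • tilde))))) ∧
    -- MKL identities for the concrete `b` and `A`
    A.PosSemidef ∧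
    (∀ ω : Fin D → ℝ,
      etaHat (fun a b => ∑ ℓ : Fin D, ω ℓ * k ℓ a b) (x, y) = ω ⬝ᵥ bb) ∧
    (∀ ω : Fin D → ℝ,
      sigmaHatSq (fun a b => ∑ ℓ : Fin D, ω ℓ * k ℓ a b) (x, y) = ω ⬝ᵥ (A *ᵥ ω)) := by
  exact ⟨fun A' b' lam Q' tilde hA' _hb hlam hQ htn htb hopt =>
      qpOpt A' b' lam Q' tilde hA' hlam hQ htn htb hopt,
    Apsd Hvec A hA,
    fun ω => etaComb k x y Hvec hHvec bb hbb ω,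
    fun ω => sigmaComb k x y Hvec hHvec A hA ω⟩
end
end

section
/- Let k be a fixed symmetric kernel with |k(x,y)| ≤ ν for all x, y, and let (X_1,Y_1),…,(X_n,Y_n) be points. Let σ̂² be the variance estimator computed from these points, and let (σ̂')² be the estimator computed after replacing the single pair (X_1,Y_1) by another pair (X_1',Y_1') (all other points unchanged). Then | σ̂² − (σ̂')² | ≤ (64·ν²/n³)·(14n² − 11n + 3) ≤ 896·ν²/n. (The same bound holds when any single pair (X_i,Y_i) is replaced.) -/
open MeasureTheory Finset

noncomputable section

private lemma myabs_sub (a b : ℝ) : |a - b| ≤ |a| + |b| := by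
  calc |a - b| = |a + -b| := by rw [sub_eq_add_neg]
  _ ≤ |a| + |-b| := abs_add_le _ _
  _ = |a| + |b| := by rw [abs_neg]

private lemma bounded_diff_key {n : ℕ} (hn : 1 ≤ n) (i : Fin n) (H H' : Fin n → Fin n → ℝ)
    (c : ℝ) (hc : 0 ≤ c) (hH : ∀ j l, |H j l| ≤ c) (hH' : ∀ j l, |H' j l| ≤ c)
    (heq : ∀ j l, j ≠ i → l ≠ i → H' j l = H j l) :
    |4 * ((1 / (n:ℝ)^3) * ∑ j, (∑ l, H j l)^2 - (1 / (n:ℝ)^4) * (∑ j, ∑ l, H j l)^2)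
      - 4 * ((1 / (n:ℝ)^3) * ∑ j, (∑ l, H' j l)^2 - (1 / (n:ℝ)^4) * (∑ j, ∑ l, H' j l)^2)|
      ≤ (4 * c^2 / (n:ℝ)^3) * (14*(n:ℝ)^2 - 11*(n:ℝ) + 3) := by
  set N : ℝ := (n:ℝ) with hNdef
  have hN : (1:ℝ) ≤ N := by rw [hNdef]; exact_mod_cast hn
  have hN0 : (0:ℝ) < N := by linarith
  -- row sum bounds
  have hRb : ∀ (G : Fin n → Fin n → ℝ), (∀ j l, |G j l| ≤ c) → ∀ j, |∑ l, G j l| ≤ N * c := by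
    intro G hG j
    calc |∑ l, G j l| ≤ ∑ l, |G j l| := Finset.abs_sum_le_sum_abs _ _
    _ ≤ ∑ _l : Fin n, c := Finset.sum_le_sum fun l _ => hG j l
    _ = N * c := by rw [Finset.sum_const, Finset.card_univ, Fintype.card_fin, nsmul_eq_mul]
  -- row difference off i
  have hRdiff : ∀ j, j ≠ i → (∑ l, H j l) - (∑ l, H' j l) = H j i - H' j i := by
    intro j hj
    rw [← Finset.sum_sub_distrib]
    apply Finset.sum_eq_single_of_mem i (Finset.mem_univ i)
    intro l _ hl
    rw [heq j l hj hl, sub_self]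
  have hdiffb : ∀ j l, |H j l - H' j l| ≤ 2 * c := by
    intro j l
    calc |H j l - H' j l| ≤ |H j l| + |H' j l| := myabs_sub _ _
    _ ≤ 2 * c := by have := hH j l; have := hH' j l; linarith
  have hRidiff : |(∑ l, H i l) - (∑ l, H' i l)| ≤ N * (2 * c) := by
    rw [← Finset.sum_sub_distrib]
    calc |∑ l, (H i l - H' i l)| ≤ ∑ l, |H i l - H' i l| := Finset.abs_sum_le_sum_abs _ _
    _ ≤ ∑ _l : Fin n, 2 * c := Finset.sum_le_sum fun l _ => hdiffb i l
    _ = N * (2 * c) := by rw [Finset.sum_const, Finset.card_univ, Fintype.card_fin, nsmul_eq_mul]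
  have hcastsub : ((n - 1 : ℕ) : ℝ) = N - 1 := by
    rw [Nat.cast_sub hn]; norm_num; exact hNdef.symm
  -- A difference
  have hA : |(∑ j, (∑ l, H j l)^2) - (∑ j, (∑ l, H' j l)^2)| ≤ c^2 * (5*N^2 - 4*N) := by
    rw [← Finset.sum_sub_distrib, ← Finset.sum_erase_add _ _ (Finset.mem_univ i)]
    calc |(∑ j ∈ univ.erase i, ((∑ l, H j l)^2 - (∑ l, H' j l)^2))
            + ((∑ l, H i l)^2 - (∑ l, H' i l)^2)|
        ≤ |∑ j ∈ univ.erase i, ((∑ l, H j l)^2 - (∑ l, H' j l)^2)|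
            + |(∑ l, H i l)^2 - (∑ l, H' i l)^2| := abs_add_le _ _
    _ ≤ (N - 1) * ((2*c) * (2*(N*c))) + N^2 * c^2 := by
        gcongr
        · calc |∑ j ∈ univ.erase i, ((∑ l, H j l)^2 - (∑ l, H' j l)^2)|
              ≤ ∑ j ∈ univ.erase i, |(∑ l, H j l)^2 - (∑ l, H' j l)^2| :=
                Finset.abs_sum_le_sum_abs _ _
          _ ≤ ∑ _j ∈ univ.erase i, (2*c) * (2*(N*c)) := by
              apply Finset.sum_le_sum
              intro j hj
              have hj' : j ≠ i := Finset.ne_of_mem_erase hj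
              rw [show (∑ l, H j l)^2 - (∑ l, H' j l)^2
                  = ((∑ l, H j l) - (∑ l, H' j l)) * ((∑ l, H j l) + (∑ l, H' j l)) from by
                    ring, abs_mul]
              apply mul_le_mul _ _ (abs_nonneg _) (by positivity)
              · rw [hRdiff j hj']; exact hdiffb j i
              · calc |(∑ l, H j l) + (∑ l, H' j l)| ≤ |∑ l, H j l| + |∑ l, H' j l| := abs_add_le _ _
                _ ≤ 2*(N*c) := by have := hRb H hH j; have := hRb H' hH' j; linarith
          _ = (N - 1) * ((2*c) * (2*(N*c))) := by
              rw [Finset.sum_const, Finset.card_erase_of_mem (Finset.mem_univ i),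
                Finset.card_univ, Fintype.card_fin, nsmul_eq_mul, hcastsub]
        · have h1 := abs_le.mp (hRb H hH i)
          have h2 := abs_le.mp (hRb H' hH' i)
          rw [abs_le]
          constructor <;> nlinarith [h1.1, h1.2, h2.1, h2.2]
    _ ≤ c^2 * (5*N^2 - 4*N) := by nlinarith [sq_nonneg c]
  -- B difference
  have hBd : |(∑ j, ∑ l, H j l) - (∑ j, ∑ l, H' j l)| ≤ (2*N - 1) * (2*c) := by
    rw [← Finset.sum_sub_distrib, ← Finset.sum_erase_add _ _ (Finset.mem_univ i)]
    calc |(∑ j ∈ univ.erase i, ((∑ l, H j l) - (∑ l, H' j l)))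
            + ((∑ l, H i l) - (∑ l, H' i l))|
        ≤ |∑ j ∈ univ.erase i, ((∑ l, H j l) - (∑ l, H' j l))|
            + |(∑ l, H i l) - (∑ l, H' i l)| := abs_add_le _ _
    _ ≤ (N - 1) * (2*c) + N * (2*c) := by
        gcongr
        calc |∑ j ∈ univ.erase i, ((∑ l, H j l) - (∑ l, H' j l))|
            ≤ ∑ j ∈ univ.erase i, |(∑ l, H j l) - (∑ l, H' j l)| :=
              Finset.abs_sum_le_sum_abs _ _
        _ ≤ ∑ _j ∈ univ.erase i, 2*c := by
            apply Finset.sum_le_sum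
            intro j hj
            rw [hRdiff j (Finset.ne_of_mem_erase hj)]
            exact hdiffb j i
        _ = (N - 1) * (2*c) := by
            rw [Finset.sum_const, Finset.card_erase_of_mem (Finset.mem_univ i),
              Finset.card_univ, Fintype.card_fin, nsmul_eq_mul, hcastsub]
    _ = (2*N - 1) * (2*c) := by ring
  have hBb : ∀ (G : Fin n → Fin n → ℝ), (∀ j l, |G j l| ≤ c) → |∑ j, ∑ l, G j l| ≤ N * (N * c) := by
    intro G hG
    calc |∑ j, ∑ l, G j l| ≤ ∑ j, |∑ l, G j l| := Finset.abs_sum_le_sum_abs _ _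
    _ ≤ ∑ _j : Fin n, N * c := Finset.sum_le_sum fun j _ => hRb G hG j
    _ = N * (N * c) := by rw [Finset.sum_const, Finset.card_univ, Fintype.card_fin, nsmul_eq_mul]
  have hB2 : |(∑ j, ∑ l, H j l)^2 - (∑ j, ∑ l, H' j l)^2| ≤ 4 * c^2 * N^2 * (2*N - 1) := by
    rw [show (∑ j, ∑ l, H j l)^2 - (∑ j, ∑ l, H' j l)^2
        = ((∑ j, ∑ l, H j l) - (∑ j, ∑ l, H' j l)) * ((∑ j, ∑ l, H j l) + (∑ j, ∑ l, H' j l))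
        from by ring, abs_mul]
    calc |(∑ j, ∑ l, H j l) - (∑ j, ∑ l, H' j l)| * |(∑ j, ∑ l, H j l) + (∑ j, ∑ l, H' j l)|
        ≤ ((2*N - 1) * (2*c)) * (2 * (N * (N * c))) := by
          apply mul_le_mul hBd _ (abs_nonneg _) (mul_nonneg (by linarith) (by linarith))
          calc |(∑ j, ∑ l, H j l) + (∑ j, ∑ l, H' j l)|
              ≤ |∑ j, ∑ l, H j l| + |∑ j, ∑ l, H' j l| := abs_add_le _ _
          _ ≤ 2 * (N * (N * c)) := by have := hBb H hH; have := hBb H' hH'; linarith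
    _ = 4 * c^2 * N^2 * (2*N - 1) := by ring
  -- assemble
  set A := ∑ j, (∑ l, H j l)^2 with hAdef
  set A' := ∑ j, (∑ l, H' j l)^2 with hA'def
  set B := ∑ j, ∑ l, H j l with hBdef
  set B' := ∑ j, ∑ l, H' j l with hB'def
  have hsplit : 4 * ((1 / N^3) * A - (1 / N^4) * B^2) - 4 * ((1 / N^3) * A' - (1 / N^4) * B'^2)
      = (4 / N^3) * (A - A') - (4 / N^4) * (B^2 - B'^2) := by ring
  rw [hsplit]
  have e1 : (4 * c^2 / N^3) * (14*N^2 - 11*N + 3)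
      = (4 / N^3) * (c^2 * (5*N^2 - 4*N)) + (4 / N^4) * (4 * c^2 * N^2 * (2*N - 1))
        + (4 * c^2 / N^3) * (N^2 - 3*N + 3) := by
    field_simp
    ring
  have hlast : 0 ≤ (4 * c^2 / N^3) * (N^2 - 3*N + 3) := by
    apply mul_nonneg (div_nonneg (by positivity) (by positivity))
    nlinarith [sq_nonneg (2*N - 3)]
  calc |(4 / N^3) * (A - A') - (4 / N^4) * (B^2 - B'^2)|
      ≤ |(4 / N^3) * (A - A')| + |(4 / N^4) * (B^2 - B'^2)| := myabs_sub _ _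
  _ = (4 / N^3) * |A - A'| + (4 / N^4) * |B^2 - B'^2| := by
      rw [abs_mul, abs_mul, abs_of_nonneg (by positivity : (0:ℝ) ≤ 4 / N^3),
        abs_of_nonneg (by positivity : (0:ℝ) ≤ 4 / N^4)]
  _ ≤ (4 / N^3) * (c^2 * (5*N^2 - 4*N)) + (4 / N^4) * (4 * c^2 * N^2 * (2*N - 1)) := by
      gcongr
  _ ≤ (4 * c^2 / N^3) * (14*N^2 - 11*N + 3) := by rw [e1]; linarith

/-- Bounded-differences property of the variance estimator `σ̂²`: replacing a single
pair `(X_i, Y_i)` changes it by at most `(64 ν²/n³)(14n² - 11n + 3) ≤ 896 ν²/n`. -/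
theorem sigmaHatSq_bounded_differences {𝓧 : Type*}
    (k : 𝓧 → 𝓧 → ℝ) (hsymm : ∀ x y, k x y = k y x)
    (ν : ℝ) (hbdd : ∀ x y, |k x y| ≤ ν)
    (n : ℕ) (hn : 1 ≤ n) (X Y : Fin n → 𝓧) (i : Fin n) (x' y' : 𝓧) :
    |sigmaHatSq k (X, Y) - sigmaHatSq k (Function.update X i x', Function.update Y i y')| ≤
        (64 * ν ^ 2 / (n : ℝ) ^ 3) * (14 * (n : ℝ) ^ 2 - 11 * (n : ℝ) + 3) ∧
    (64 * ν ^ 2 / (n : ℝ) ^ 3) * (14 * (n : ℝ) ^ 2 - 11 * (n : ℝ) + 3) ≤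
        896 * ν ^ 2 / (n : ℝ) := by
  have hν : 0 ≤ ν := le_trans (abs_nonneg _) (hbdd (X i) (X i))
  have hN : (1:ℝ) ≤ (n:ℝ) := by exact_mod_cast hn
  have hN0 : (0:ℝ) < (n:ℝ) := by linarith
  constructor
  · have hHb : ∀ j l, |Hmat k (X, Y) j l| ≤ 4 * ν := by
      intro j l
      have h1 := abs_le.mp (hbdd (X j) (X l))
      have h2 := abs_le.mp (hbdd (Y j) (Y l))
      have h3 := abs_le.mp (hbdd (X j) (Y l))
      have h4 := abs_le.mp (hbdd (X l) (Y j))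
      rw [Hmat, abs_le]
      constructor <;> simp only [] <;>
        [linarith [h1.1, h2.1, h3.2, h4.2]; linarith [h1.2, h2.2, h3.1, h4.1]]
    have hH'b : ∀ j l,
        |Hmat k (Function.update X i x', Function.update Y i y') j l| ≤ 4 * ν := by
      intro j l
      have h1 := abs_le.mp (hbdd (Function.update X i x' j) (Function.update X i x' l))
      have h2 := abs_le.mp (hbdd (Function.update Y i y' j) (Function.update Y i y' l))
      have h3 := abs_le.mp (hbdd (Function.update X i x' j) (Function.update Y i y' l))
      have h4 := abs_le.mp (hbdd (Function.update X i x' l) (Function.update Y i y' j))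
      rw [Hmat, abs_le]
      constructor <;> simp only [] <;>
        [linarith [h1.1, h2.1, h3.2, h4.2]; linarith [h1.2, h2.2, h3.1, h4.1]]
    have heq : ∀ j l, j ≠ i → l ≠ i →
        Hmat k (Function.update X i x', Function.update Y i y') j l = Hmat k (X, Y) j l := by
      intro j l hj hl
      simp only [Hmat, Function.update_of_ne hj, Function.update_of_ne hl]
    have key := bounded_diff_key hn i (fun j l => Hmat k (X, Y) j l)
      (fun j l => Hmat k (Function.update X i x', Function.update Y i y') j l)
      (4 * ν) (by linarith) hHb hH'b heq
    have e : (4 * (4 * ν)^2 / (n:ℝ)^3) * (14*(n:ℝ)^2 - 11*(n:ℝ) + 3)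
        = (64 * ν ^ 2 / (n : ℝ) ^ 3) * (14 * (n : ℝ) ^ 2 - 11 * (n : ℝ) + 3) := by ring
    rw [← e]
    simp only [sigmaHatSq]
    exact key
  · rw [div_mul_eq_mul_div, div_le_div_iff₀ (by positivity) hN0]
    nlinarith [mul_nonneg (mul_nonneg (sq_nonneg ν) hN0.le)
      (show (0:ℝ) ≤ 11 * (n:ℝ) - 3 by linarith)]
end
end
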